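/- arXiv:1401.4522 — 6 statements merged into one kernel-verified Lean document; each statement's English description precedes it below -/
import Mathlib

section
/- A graph G with p vertices and q edges is super edge-magic if and only if there exists a bijection f from V(G) to {1,2,...,p} such that the set S = {f(x)+f(y) : xy ∈ E(G)} consists of q consecutive integers. -/
open SimpleGraph

/-- A super edge-magic labeling of `G` with magic constant `k`: a bijection from
vertices and edges onto `{1, …, p+q}` sending vertices onto `{1, …, p}`, with
`f x + f (xy) + f y = k` for every edge `xy`. -/
def IsSEMWith {V : Type*} [Fintype V] (G : SimpleGraph V) (k : ℕ) : Prop :=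
  ∃ (f : V → ℕ) (g : G.edgeSet → ℕ),
    Function.Injective (Sum.elim f g) ∧
    Set.range (Sum.elim f g) = Set.Icc 1 (Fintype.card V + G.edgeSet.ncard) ∧
    Set.range f = Set.Icc 1 (Fintype.card V) ∧
    ∀ (x y : V) (h : G.Adj x y), f x + g ⟨s(x, y), G.mem_edgeSet.mpr h⟩ + f y = k

/-- `G` is super edge-magic. -/
def IsSEM {V : Type*} [Fintype V] (G : SimpleGraph V) : Prop :=
  ∃ k : ℕ, IsSEMWith G k

/-- The graph `G ∪ t K₁`: `G` together with `t` added isolated vertices. -/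
def unionIsolated {V : Type*} (G : SimpleGraph V) (t : ℕ) : SimpleGraph (V ⊕ Fin t) :=
  G.map Function.Embedding.inl

/-- The super edge-magic deficiency `μₛ(G)`: the least `t` such that `G ∪ t K₁`
is super edge-magic, or `⊤` if there is no such `t`. -/
noncomputable def semDeficiency {V : Type*} [Fintype V] (G : SimpleGraph V) : ℕ∞ :=
  sInf ((fun t : ℕ => (t : ℕ∞)) '' {t : ℕ | IsSEM (unionIsolated G t)})

/-- `H n`: the wheel `W_n` (hub `0`, rim `1, …, n`) minus the spoke `{0, 1}`. -/
def wheelMinusSpoke (n : ℕ) : SimpleGraph (Fin (n + 1)) :=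
  SimpleGraph.fromRel (fun i j =>
    ((i : ℕ) = 0 ∧ 2 ≤ (j : ℕ)) ∨
    ((j : ℕ) = (i : ℕ) + 1 ∧ 1 ≤ (i : ℕ)) ∨
    ((i : ℕ) = n ∧ (j : ℕ) = 1))

/-- The join `P_n + K̄_m`: a path `u_1 … u_n` plus `m` vertices joined to every `u_i`. -/
def pathJoin (n m : ℕ) : SimpleGraph (Fin n ⊕ Fin m) :=
  SimpleGraph.fromRel (fun a b =>
    (∃ i j : Fin n, a = Sum.inl i ∧ b = Sum.inl j ∧ (j : ℕ) = (i : ℕ) + 1) ∨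
    (∃ (i : Fin n) (j : Fin m), a = Sum.inl i ∧ b = Sum.inr j))

/-- The join `K_{1,n} + K̄_m`: a star with center `Sum.inl 0` and leaves
`Sum.inl i`, `i ≠ 0`, plus `m` vertices joined to all star vertices. -/
def starJoin (n m : ℕ) : SimpleGraph (Fin (n + 1) ⊕ Fin m) :=
  SimpleGraph.fromRel (fun a b =>
    (∃ i : Fin (n + 1), a = Sum.inl 0 ∧ b = Sum.inl i ∧ i ≠ 0) ∨
    (∃ (i : Fin (n + 1)) (j : Fin m), a = Sum.inl i ∧ b = Sum.inr j))

/-- The join `C_n + K̄_m`: a cycle `u_1 … u_n` plus `m` vertices joined to every `u_i`. -/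
def cycleJoin (n m : ℕ) : SimpleGraph (Fin n ⊕ Fin m) :=
  SimpleGraph.fromRel (fun a b =>
    (∃ i j : Fin n, a = Sum.inl i ∧ b = Sum.inl j ∧
      ((j : ℕ) = (i : ℕ) + 1 ∨ ((i : ℕ) = n - 1 ∧ (j : ℕ) = 0))) ∨
    (∃ (i : Fin n) (j : Fin m), a = Sum.inl i ∧ b = Sum.inr j))

/-- The join `G + K̄_m`: `G` plus `m` new vertices joined to every vertex of `G`. -/
def joinIsolated {V : Type*} (G : SimpleGraph V) (m : ℕ) : SimpleGraph (V ⊕ Fin m) :=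
  SimpleGraph.fromRel (fun a b =>
    (∃ x y : V, a = Sum.inl x ∧ b = Sum.inl y ∧ G.Adj x y) ∨
    (∃ (x : V) (j : Fin m), a = Sum.inl x ∧ b = Sum.inr j))

/-- `G` with `p` vertices and `q` edges is super edge-magic iff there is a
bijection `f : V(G) → {1,…,p}` whose edge-sum set `{f x + f y : xy ∈ E}` consists of `q`
consecutive integers. -/
theorem stmt0 {V : Type*} [Fintype V] (G : SimpleGraph V) :
    IsSEM G ↔ ∃ f : V → ℕ, Function.Injective f ∧
      Set.range f = Set.Icc 1 (Fintype.card V) ∧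
      ∃ a : ℕ, {t : ℕ | ∃ x y, G.Adj x y ∧ f x + f y = t} =
        Set.Icc a (a + G.edgeSet.ncard - 1) := by
  classical
  set p := Fintype.card V with hp
  set q := G.edgeSet.ncard with hq
  have hedge : ∀ e : G.edgeSet, ∃ x y, G.Adj x y ∧ (e : Sym2 V) = s(x, y) := by
    rintro ⟨e, he⟩
    induction e using Sym2.ind with
    | _ x y => exact ⟨x, y, G.mem_edgeSet.mp he, rfl⟩
  constructor
  · rintro ⟨k, f, g, hinj, hrange, hrangef, hmagic⟩
    have hfinj : Function.Injective f := fun x y hxy => by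
      have : (Sum.inl x : V ⊕ G.edgeSet) = Sum.inl y := hinj (by simpa using hxy)
      simpa using this
    refine ⟨f, hfinj, hrangef, ?_⟩
    have hfmem : ∀ x, f x ∈ Set.Icc 1 p := fun x => hrangef ▸ Set.mem_range_self x
    have hgmem : ∀ e : G.edgeSet, g e ∈ Set.Icc 1 (p + q) := fun e => by
      have : Sum.elim f g (Sum.inr e) ∈ Set.range (Sum.elim f g) := Set.mem_range_self _
      rw [hrange] at this; simpa using this
    have hgnot : ∀ e : G.edgeSet, p + 1 ≤ g e := by
      intro e
      by_contra hle
      have h1 : (1:ℕ) ≤ g e := (hgmem e).1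
      have : g e ∈ Set.range f := hrangef ▸ Set.mem_Icc.mpr ⟨h1, by omega⟩
      obtain ⟨x, hx⟩ := this
      have : (Sum.inl x : V ⊕ G.edgeSet) = Sum.inr e := hinj (by simpa using hx)
      simp at this
    have hmagic' : ∀ e : G.edgeSet, ∃ x y, G.Adj x y ∧ f x + g e + f y = k := by
      intro e
      obtain ⟨x, y, hadj, hxy⟩ := hedge e
      refine ⟨x, y, hadj, ?_⟩
      have he : e = ⟨s(x, y), G.mem_edgeSet.mpr hadj⟩ := Subtype.ext hxy
      rw [he]; exact hmagic x y hadj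
    rcases Nat.eq_zero_or_pos q with hq0 | hq1
    · refine ⟨1, ?_⟩
      have hempty : G.edgeSet = ∅ := Set.ncard_eq_zero (Set.toFinite _) |>.mp (by omega)
      ext t
      simp only [Set.mem_setOf_eq, Set.mem_Icc]
      constructor
      · rintro ⟨x, y, hadj, -⟩
        exact absurd (G.mem_edgeSet.mpr hadj) (by simp [hempty])
      · intro ht; omega
    · -- range of g is exactly Icc (p+1) (p+q)
      have hrg : ∀ v, p + 1 ≤ v → v ≤ p + q → ∃ e : G.edgeSet, g e = v := by
        intro v h1 h2
        have hv : v ∈ Set.range (Sum.elim f g) := by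
          rw [hrange]; exact Set.mem_Icc.mpr ⟨by omega, h2⟩
        obtain ⟨s, hs⟩ := hv
        rcases s with x | e
        · exfalso; have := (hfmem x).2; simp only [Sum.elim_inl] at hs; omega
        · exact ⟨e, hs⟩
      -- k is big: some edge has label p+q
      obtain ⟨em, hem⟩ := hrg (p + q) (by omega) le_rfl
      obtain ⟨xm, ym, hadjm, hkm⟩ := hmagic' em
      have hklarge : p + q + 2 ≤ k := by
        have := (hfmem xm).1; have := (hfmem ym).1; omega
      refine ⟨k - (p + q), ?_⟩
      ext t
      simp only [Set.mem_setOf_eq, Set.mem_Icc]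
      constructor
      · rintro ⟨x, y, hadj, rfl⟩
        have heq := hmagic x y hadj
        have hge := hgnot ⟨s(x, y), G.mem_edgeSet.mpr hadj⟩
        have hle := (hgmem ⟨s(x, y), G.mem_edgeSet.mpr hadj⟩).2
        omega
      · rintro ⟨h1, h2⟩
        obtain ⟨e, he⟩ := hrg (k - t) (by omega) (by omega)
        obtain ⟨x, y, hadj, hsum⟩ := hmagic' e
        exact ⟨x, y, hadj, by omega⟩
  · rintro ⟨f, hfinj, hrangef, a, hS⟩
    have hfmem : ∀ x, f x ∈ Set.Icc 1 p := fun x => hrangef ▸ Set.mem_range_self x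
    rcases Nat.eq_zero_or_pos q with hq0 | hq1
    · have hempty : G.edgeSet = ∅ := Set.ncard_eq_zero (Set.toFinite _) |>.mp (by omega)
      have hE : IsEmpty G.edgeSet := by rw [hempty]; infer_instance
      refine ⟨0, f, fun _ => 0, ?_, ?_, hrangef, ?_⟩
      · rintro (x | e) (y | e') h
        · exact congrArg Sum.inl (hfinj h)
        · exact (hE.false e').elim
        · exact (hE.false e).elim
        · exact (hE.false e).elim
      · rw [Set.Sum.elim_range]
        rw [Set.range_eq_empty (fun _ : G.edgeSet => (0:ℕ)), Set.union_empty, hrangef]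
        rw [show p + q = p from by omega]
      · intro x y h
        exact ((hE.false ⟨s(x, y), G.mem_edgeSet.mpr h⟩)).elim
    · set k := p + q + a with hk
      have hsum_mem : ∀ x y, G.Adj x y → f x + f y ∈ Set.Icc a (a + q - 1) := by
        intro x y h
        rw [← hS]; exact ⟨x, y, h, rfl⟩
      have haS : ∃ x y, G.Adj x y ∧ f x + f y = a := by
        have : a ∈ Set.Icc a (a + q - 1) := Set.mem_Icc.mpr ⟨le_rfl, by omega⟩
        rw [← hS] at this; exact this
      obtain ⟨xa, ya, hadja, hsuma⟩ := haS
      have ha2 : 2 ≤ a := by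
        have := (hfmem xa).1; have := (hfmem ya).1; omega
      let σ : Sym2 V → ℕ := Sym2.lift ⟨fun x y => f x + f y, fun x y => by ring⟩
      have hσmk : ∀ x y, σ s(x, y) = f x + f y := fun x y => rfl
      have hσmem : ∀ e : G.edgeSet, σ e.1 ∈ Set.Icc a (a + q - 1) := by
        intro e
        obtain ⟨x, y, hadj, hxy⟩ := hedge e
        rw [hxy, hσmk]
        exact hsum_mem x y hadj
      have hσsurj : ∀ t ∈ Set.Icc a (a + q - 1), ∃ e : G.edgeSet, σ e.1 = t := by
        intro t ht
        rw [← hS] at ht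
        obtain ⟨x, y, hadj, hsum⟩ := ht
        exact ⟨⟨s(x, y), G.mem_edgeSet.mpr hadj⟩, hsum⟩
      have hσinj : Function.Injective (fun e : G.edgeSet => σ e.1) := by
        let τ : G.edgeSet → (Set.Icc a (a + q - 1) : Set ℕ) := fun e => ⟨σ e.1, hσmem e⟩
        have hτsurj : Function.Surjective τ := by
          rintro ⟨t, ht⟩
          obtain ⟨e, he⟩ := hσsurj t ht
          exact ⟨e, Subtype.ext he⟩
        have hcard : Nat.card G.edgeSet = Nat.card (Set.Icc a (a + q - 1) : Set ℕ) := by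
          rw [Nat.card_coe_set_eq, Nat.card_coe_set_eq, ← hq,
            show (Set.Icc a (a + q - 1)) = ↑(Finset.Icc a (a + q - 1)) by simp,
            Set.ncard_coe_finset, Nat.card_Icc]
          omega
        have hτbij : Function.Bijective τ :=
          (Nat.bijective_iff_surjective_and_card τ).mpr ⟨hτsurj, hcard⟩
        intro e1 e2 h
        exact hτbij.injective (Subtype.ext h)
      let g : G.edgeSet → ℕ := fun e => k - σ e.1
      have hgmem : ∀ e : G.edgeSet, g e ∈ Set.Icc (p + 1) (p + q) := by
        intro e
        have := hσmem e
        simp only [Set.mem_Icc] at this ⊢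
        simp only [g, hk]
        omega
      refine ⟨k, f, g, ?_, ?_, hrangef, ?_⟩
      · rintro (x | e) (y | e') h
        · exact congrArg Sum.inl (hfinj h)
        · exfalso
          have h1 := (hfmem x).2
          have h2 := (hgmem e').1
          simp only [Sum.elim_inl, Sum.elim_inr] at h
          omega
        · exfalso
          have h1 := (hfmem y).2
          have h2 := (hgmem e).1
          simp only [Sum.elim_inl, Sum.elim_inr] at h
          omega
        · simp only [Sum.elim_inr] at h
          have h1 := hσmem e
          have h2 := hσmem e'
          simp only [Set.mem_Icc] at h1 h2
          have : σ e.1 = σ e'.1 := by simp only [g, hk] at h; omega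
          exact congrArg Sum.inr (hσinj this)
      · rw [Set.Sum.elim_range, hrangef]
        have hrg : Set.range g = Set.Icc (p + 1) (p + q) := by
          apply Set.eq_of_subset_of_subset
          · rintro v ⟨e, rfl⟩; exact hgmem e
          · rintro v hv
            simp only [Set.mem_Icc] at hv
            obtain ⟨e, he⟩ := hσsurj (k - v) (Set.mem_Icc.mpr ⟨by omega, by omega⟩)
            have := hσmem e
            simp only [Set.mem_Icc] at this
            exact ⟨e, by simp only [g]; omega⟩
        rw [hrg]
        ext n
        simp only [Set.mem_union, Set.mem_Icc]
        omega
      · intro x y h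
        have hs := hsum_mem x y h
        simp only [Set.mem_Icc] at hs
        have : g ⟨s(x, y), G.mem_edgeSet.mpr h⟩ = k - (f x + f y) := by
          simp only [g]; rw [hσmk]
        rw [this]
        omega
end

section
/- For every integer n ≥ 5, the graph H_n = W_n − e (wheel minus a spoke edge) is not super edge-magic. -/
open SimpleGraph

private lemma wms_adj {n : ℕ} {x y : Fin (n+1)} :
    (wheelMinusSpoke n).Adj x y ↔ ((x:ℕ) ≠ (y:ℕ) ∧
      ((((x:ℕ) = 0 ∧ 2 ≤ (y:ℕ)) ∨ ((y:ℕ) = (x:ℕ)+1 ∧ 1 ≤ (x:ℕ)) ∨ ((x:ℕ) = n ∧ (y:ℕ) = 1)) ∨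
       (((y:ℕ) = 0 ∧ 2 ≤ (x:ℕ)) ∨ ((x:ℕ) = (y:ℕ)+1 ∧ 1 ≤ (y:ℕ)) ∨ ((y:ℕ) = n ∧ (x:ℕ) = 1)))) := by
  rw [wheelMinusSpoke, SimpleGraph.fromRel_adj]
  constructor
  · rintro ⟨h1, h2⟩; exact ⟨fun hv => h1 (Fin.ext hv), h2⟩
  · rintro ⟨h1, h2⟩; exact ⟨fun hv => h1 (congrArg Fin.val hv), h2⟩

private lemma rim_two {n : ℕ} (hn : 5 ≤ n) {x y z w : Fin (n+1)}
    (hx : x ≠ 0) (hy : y ≠ 0) (hz : z ≠ 0) (hw : w ≠ 0)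
    (a1 : (wheelMinusSpoke n).Adj x y) (a2 : (wheelMinusSpoke n).Adj x z)
    (a3 : (wheelMinusSpoke n).Adj x w)
    (d1 : y ≠ z) (d2 : y ≠ w) (d3 : z ≠ w) : False := by
  rw [wms_adj] at a1 a2 a3
  have hx' : (x:ℕ) ≠ 0 := fun h => hx (Fin.ext (by simp [h]))
  have hy' : (y:ℕ) ≠ 0 := fun h => hy (Fin.ext (by simp [h]))
  have hz' : (z:ℕ) ≠ 0 := fun h => hz (Fin.ext (by simp [h]))
  have hw' : (w:ℕ) ≠ 0 := fun h => hw (Fin.ext (by simp [h]))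
  have d1' : (y:ℕ) ≠ (z:ℕ) := fun h => d1 (Fin.ext h)
  have d2' : (y:ℕ) ≠ (w:ℕ) := fun h => d2 (Fin.ext h)
  have d3' : (z:ℕ) ≠ (w:ℕ) := fun h => d3 (Fin.ext h)
  have := x.isLt; have := y.isLt; have := z.isLt; have := w.isLt
  omega

private lemma rim_tri {n : ℕ} (hn : 5 ≤ n) {x y z : Fin (n+1)}
    (hx : x ≠ 0) (hy : y ≠ 0) (hz : z ≠ 0)
    (a1 : (wheelMinusSpoke n).Adj x y) (a2 : (wheelMinusSpoke n).Adj x z)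
    (a3 : (wheelMinusSpoke n).Adj y z) : False := by
  rw [wms_adj] at a1 a2 a3
  have hx' : (x:ℕ) ≠ 0 := fun h => hx (Fin.ext (by simp [h]))
  have hy' : (y:ℕ) ≠ 0 := fun h => hy (Fin.ext (by simp [h]))
  have hz' : (z:ℕ) ≠ 0 := fun h => hz (Fin.ext (by simp [h]))
  have := x.isLt; have := y.isLt; have := z.isLt
  omega

private lemma bottomCase {n : ℕ} (hn : 5 ≤ n) (f : Fin (n+1) → ℕ)
    (hfinj : Function.Injective f)
    (hfmem : ∀ x, 1 ≤ f x ∧ f x ≤ n + 1)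
    (hcover : ∀ v, 3 ≤ v → v ≤ 2*n+1 → ∃ x y, (wheelMinusSpoke n).Adj x y ∧ f x + f y = v)
    (hh : 5 ≤ f 0) : False := by
  have h12 : ∃ a b, (wheelMinusSpoke n).Adj a b ∧ f a = 1 ∧ f b = 2 := by
    obtain ⟨x, y, hxy, h3⟩ := hcover 3 (by omega) (by omega)
    have hne : f x ≠ f y := fun h => hxy.ne (hfinj h)
    have hbx := hfmem x; have hby := hfmem y
    rcases (show (f x = 1 ∧ f y = 2) ∨ (f x = 2 ∧ f y = 1) by omega) with ⟨u, v⟩ | ⟨u, v⟩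
    exacts [⟨x, y, hxy, u, v⟩, ⟨y, x, hxy.symm, v, u⟩]
  have h13 : ∃ a b, (wheelMinusSpoke n).Adj a b ∧ f a = 1 ∧ f b = 3 := by
    obtain ⟨x, y, hxy, h4⟩ := hcover 4 (by omega) (by omega)
    have hne : f x ≠ f y := fun h => hxy.ne (hfinj h)
    have hbx := hfmem x; have hby := hfmem y
    rcases (show (f x = 1 ∧ f y = 3) ∨ (f x = 3 ∧ f y = 1) by omega) with ⟨u, v⟩ | ⟨u, v⟩
    exacts [⟨x, y, hxy, u, v⟩, ⟨y, x, hxy.symm, v, u⟩]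
  have h5 : (∃ a b, (wheelMinusSpoke n).Adj a b ∧ f a = 1 ∧ f b = 4) ∨
      (∃ a b, (wheelMinusSpoke n).Adj a b ∧ f a = 2 ∧ f b = 3) := by
    obtain ⟨x, y, hxy, h5⟩ := hcover 5 (by omega) (by omega)
    have hne : f x ≠ f y := fun h => hxy.ne (hfinj h)
    have hbx := hfmem x; have hby := hfmem y
    rcases (show (f x = 1 ∧ f y = 4) ∨ (f x = 4 ∧ f y = 1) ∨ (f x = 2 ∧ f y = 3) ∨
      (f x = 3 ∧ f y = 2) by omega) with ⟨u, v⟩ | ⟨u, v⟩ | ⟨u, v⟩ | ⟨u, v⟩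
    exacts [Or.inl ⟨x, y, hxy, u, v⟩, Or.inl ⟨y, x, hxy.symm, v, u⟩,
      Or.inr ⟨x, y, hxy, u, v⟩, Or.inr ⟨y, x, hxy.symm, v, u⟩]
  obtain ⟨a, b, hab, ha1, hb2⟩ := h12
  obtain ⟨a', c, hac, ha'1, hc3⟩ := h13
  obtain rfl : a = a' := hfinj (ha1.trans ha'1.symm)
  have ha0 : a ≠ 0 := fun h => by rw [h] at ha1; omega
  have hb0 : b ≠ 0 := fun h => by rw [h] at hb2; omega
  have hc0 : c ≠ 0 := fun h => by rw [h] at hc3; omega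
  have hbc : b ≠ c := fun h => by rw [h] at hb2; omega
  rcases h5 with ⟨a'', d, had, ha''1, hd4⟩ | ⟨u, v, huv, hu2, hv3⟩
  · obtain rfl : a = a'' := hfinj (ha1.trans ha''1.symm)
    have hd0 : d ≠ 0 := fun h => by rw [h] at hd4; omega
    have hbd : b ≠ d := fun h => by rw [h] at hb2; omega
    have hcd : c ≠ d := fun h => by rw [h] at hc3; omega
    exact rim_two hn ha0 hb0 hc0 hd0 hab hac had hbc hbd hcd
  · obtain rfl : b = u := hfinj (hb2.trans hu2.symm)
    obtain rfl : c = v := hfinj (hc3.trans hv3.symm)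
    exact rim_tri hn ha0 hb0 hc0 hab hac huv

private lemma topCase {n : ℕ} (hn : 5 ≤ n) (f : Fin (n+1) → ℕ)
    (hfinj : Function.Injective f)
    (hfmem : ∀ x, 1 ≤ f x ∧ f x ≤ n + 1)
    (hcover : ∀ v, 3 ≤ v → v ≤ 2*n+1 → ∃ x y, (wheelMinusSpoke n).Adj x y ∧ f x + f y = v)
    (hh : f 0 + 4 ≤ n + 1) : False := by
  have h12 : ∃ a b, (wheelMinusSpoke n).Adj a b ∧ f a = n+1 ∧ f b = n := by
    obtain ⟨x, y, hxy, h3⟩ := hcover (2*n+1) (by omega) (by omega)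
    have hne : f x ≠ f y := fun h => hxy.ne (hfinj h)
    have hbx := hfmem x; have hby := hfmem y
    rcases (show (f x = n+1 ∧ f y = n) ∨ (f x = n ∧ f y = n+1) by omega) with ⟨u, v⟩ | ⟨u, v⟩
    exacts [⟨x, y, hxy, u, v⟩, ⟨y, x, hxy.symm, v, u⟩]
  have h13 : ∃ a b, (wheelMinusSpoke n).Adj a b ∧ f a = n+1 ∧ f b = n-1 := by
    obtain ⟨x, y, hxy, h4⟩ := hcover (2*n) (by omega) (by omega)
    have hne : f x ≠ f y := fun h => hxy.ne (hfinj h)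
    have hbx := hfmem x; have hby := hfmem y
    rcases (show (f x = n+1 ∧ f y = n-1) ∨ (f x = n-1 ∧ f y = n+1) by omega) with ⟨u, v⟩ | ⟨u, v⟩
    exacts [⟨x, y, hxy, u, v⟩, ⟨y, x, hxy.symm, v, u⟩]
  have h5 : (∃ a b, (wheelMinusSpoke n).Adj a b ∧ f a = n+1 ∧ f b = n-2) ∨
      (∃ a b, (wheelMinusSpoke n).Adj a b ∧ f a = n ∧ f b = n-1) := by
    obtain ⟨x, y, hxy, h5⟩ := hcover (2*n-1) (by omega) (by omega)
    have hne : f x ≠ f y := fun h => hxy.ne (hfinj h)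
    have hbx := hfmem x; have hby := hfmem y
    rcases (show (f x = n+1 ∧ f y = n-2) ∨ (f x = n-2 ∧ f y = n+1) ∨ (f x = n ∧ f y = n-1) ∨
      (f x = n-1 ∧ f y = n) by omega) with ⟨u, v⟩ | ⟨u, v⟩ | ⟨u, v⟩ | ⟨u, v⟩
    exacts [Or.inl ⟨x, y, hxy, u, v⟩, Or.inl ⟨y, x, hxy.symm, v, u⟩,
      Or.inr ⟨x, y, hxy, u, v⟩, Or.inr ⟨y, x, hxy.symm, v, u⟩]
  obtain ⟨a, b, hab, ha1, hb2⟩ := h12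
  obtain ⟨a', c, hac, ha'1, hc3⟩ := h13
  obtain rfl : a = a' := hfinj (ha1.trans ha'1.symm)
  have ha0 : a ≠ 0 := fun h => by rw [h] at ha1; omega
  have hb0 : b ≠ 0 := fun h => by rw [h] at hb2; omega
  have hc0 : c ≠ 0 := fun h => by rw [h] at hc3; omega
  have hbc : b ≠ c := fun h => by rw [h] at hb2; omega
  rcases h5 with ⟨a'', d, had, ha''1, hd4⟩ | ⟨u, v, huv, hu2, hv3⟩
  · obtain rfl : a = a'' := hfinj (ha1.trans ha''1.symm)
    have hd0 : d ≠ 0 := fun h => by rw [h] at hd4; omega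
    have hbd : b ≠ d := fun h => by rw [h] at hb2; omega
    have hcd : c ≠ d := fun h => by rw [h] at hc3; omega
    exact rim_two hn ha0 hb0 hc0 hd0 hab hac had hbc hbd hcd
  · obtain rfl : b = u := hfinj (hb2.trans hu2.symm)
    obtain rfl : c = v := hfinj (hc3.trans hv3.symm)
    exact rim_tri hn ha0 hb0 hc0 hab hac huv


private def rimV (n i : ℕ) : Fin (n + 1) := if h : i < n + 1 then ⟨i, h⟩ else 0

private lemma rimV_val {n i : ℕ} (h : i ≤ n) : ((rimV n i : Fin (n+1)) : ℕ) = i := by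
  unfold rimV; rw [dif_pos (by omega)]

private lemma rimV_inj {n a b : ℕ} (ha : a ≤ n) (hb : b ≤ n) (h : rimV n a = rimV n b) : a = b := by
  have hv := congrArg Fin.val h
  rwa [rimV_val ha, rimV_val hb] at hv

private def edgeIdx (n i : ℕ) : Sym2 (Fin (n + 1)) :=
  if i < n - 1 then s(rimV n 0, rimV n (i + 2))
  else if i < 2 * n - 2 then s(rimV n (i - (n - 1) + 1), rimV n (i - (n - 1) + 2))
  else s(rimV n n, rimV n 1)

private lemma edgeIdx_mem {n i : ℕ} (hn : 5 ≤ n) (hi : i < 2 * n - 1) :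
    edgeIdx n i ∈ (wheelMinusSpoke n).edgeSet := by
  unfold edgeIdx
  split_ifs with h1 h2
  · have e1 := rimV_val (n := n) (i := 0) (by omega)
    have e2 := rimV_val (n := n) (i := i + 2) (by omega)
    rw [SimpleGraph.mem_edgeSet, wms_adj, e1, e2]
    omega
  · have e1 := rimV_val (n := n) (i := i - (n-1) + 1) (by omega)
    have e2 := rimV_val (n := n) (i := i - (n-1) + 2) (by omega)
    rw [SimpleGraph.mem_edgeSet, wms_adj, e1, e2]
    omega
  · have e1 := rimV_val (n := n) (i := n) (by omega)
    have e2 := rimV_val (n := n) (i := 1) (by omega)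
    rw [SimpleGraph.mem_edgeSet, wms_adj, e1, e2]
    omega

private lemma edgeIdx_inj {n : ℕ} (hn : 5 ≤ n) :
    ∀ i < 2*n-1, ∀ j < 2*n-1, edgeIdx n i = edgeIdx n j → i = j := by
  intro i hi j hj h
  unfold edgeIdx at h
  split_ifs at h <;>
    rw [Sym2.eq_iff] at h <;>
    rcases h with ⟨h1, h2⟩ | ⟨h1, h2⟩ <;>
    (have e1 := rimV_inj (by omega) (by omega) h1;
     have e2 := rimV_inj (by omega) (by omega) h2;
     omega)

private lemma edge_count {n : ℕ} (hn : 5 ≤ n) :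
    2 * n - 1 ≤ (wheelMinusSpoke n).edgeSet.ncard := by
  have hFinj : Function.Injective
      (fun i : Fin (2*n-1) => (⟨edgeIdx n i, edgeIdx_mem hn i.isLt⟩ : (wheelMinusSpoke n).edgeSet)) := by
    intro i j h
    exact Fin.ext (edgeIdx_inj hn i.val i.isLt j.val j.isLt (congrArg Subtype.val h))
  calc 2*n-1 = Nat.card (Fin (2*n-1)) := by simp
  _ ≤ Nat.card (wheelMinusSpoke n).edgeSet := Nat.card_le_card_of_injective _ hFinj
  _ = (wheelMinusSpoke n).edgeSet.ncard := Nat.card_coe_set_eq _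

private lemma edge_decomp {V : Type*} {G : SimpleGraph V} (e : G.edgeSet) :
    ∃ x y, ∃ h : G.Adj x y, e = ⟨s(x,y), G.mem_edgeSet.mpr h⟩ := by
  obtain ⟨e', he'⟩ := e
  revert he'
  induction e' using Sym2.ind with
  | _ x y => intro he'; exact ⟨x, y, G.mem_edgeSet.mp he', Subtype.ext rfl⟩


private instance wmsDec {n : ℕ} : DecidableRel (wheelMinusSpoke n).Adj := fun x y =>
  decidable_of_iff _ (SimpleGraph.fromRel_adj _ x y).symm

private def L5 : List (Sym2 (Fin 6)) :=
  [s(0,2), s(0,3), s(0,4), s(0,5), s(1,2), s(2,3), s(3,4), s(4,5), s(5,1)]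

private lemma id5 (f : Fin 6 → ℕ) (hfinj : Function.Injective f)
    (hrangef : Set.range f = Set.Icc 1 6)
    (hcover : ∀ v, 3 ≤ v → v ≤ 11 → ∃ x y, (wheelMinusSpoke 5).Adj x y ∧ f x + f y = v)
    (hdist : ∀ x y x' y', (wheelMinusSpoke 5).Adj x y → (wheelMinusSpoke 5).Adj x' y' →
      f x + f y = f x' + f y' → s(x,y) = s(x',y')) : False := by
  have hfmem : ∀ x, 1 ≤ f x ∧ f x ≤ 6 := fun x => by
    have hx : f x ∈ Set.range f := ⟨x, rfl⟩
    rw [hrangef, Set.mem_Icc] at hx; exact hx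
  set S : Sym2 (Fin 6) → ℕ := Sym2.lift ⟨fun x y => f x + f y, fun x y => Nat.add_comm _ _⟩ with hS
  have hSmk : ∀ x y : Fin 6, S s(x,y) = f x + f y := fun x y => rfl
  have hadjE : ∀ x y : Fin 6, (wheelMinusSpoke 5).Adj x y → s(x,y) ∈ L5.toFinset := by decide
  have hEadj : ∀ x y : Fin 6, s(x,y) ∈ L5.toFinset → (wheelMinusSpoke 5).Adj x y := by decide
  have himg : L5.toFinset.image S = Finset.Icc 3 11 := by
    apply Finset.Subset.antisymm
    · intro m hm
      rw [Finset.mem_image] at hm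
      obtain ⟨e, he, rfl⟩ := hm
      revert he
      induction e using Sym2.ind with
      | _ x y =>
        intro he
        have hxy := hEadj x y he
        have h1 := hfmem x; have h2 := hfmem y
        have hne : f x ≠ f y := fun h => hxy.ne (hfinj h)
        rw [hSmk, Finset.mem_Icc]
        omega
    · intro m hm
      rw [Finset.mem_Icc] at hm
      obtain ⟨x, y, hxy, hs⟩ := hcover m hm.1 hm.2
      rw [Finset.mem_image]
      exact ⟨s(x,y), hadjE x y hxy, by rw [hSmk]; exact hs⟩
  have hinjE : ∀ e1 ∈ L5.toFinset, ∀ e2 ∈ L5.toFinset, S e1 = S e2 → e1 = e2 := by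
    intro e1 h1 e2 h2 h
    revert h1 h2 h
    refine Sym2.inductionOn₂ e1 e2 ?_
    intro x y x' y' h1 h2 h
    rw [hSmk, hSmk] at h
    exact hdist x y x' y' (hEadj x y h1) (hEadj x' y' h2) h
  have e2 := Finset.sum_image (f := id) hinjE
  rw [himg] at e2
  simp only [id_eq] at e2
  have e1 : ∑ m ∈ Finset.Icc 3 11, m = 63 := by decide
  have e3 : ∑ e ∈ L5.toFinset, S e =
      4*f 0 + 2*f 1 + 3*f 2 + 3*f 3 + 3*f 4 + 3*f 5 := by
    rw [List.sum_toFinset _ (by decide)]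
    simp only [L5, List.map_cons, List.map_nil, List.sum_cons, List.sum_nil, hSmk]
    ring
  have himgf : Finset.image f Finset.univ = Finset.Icc 1 6 := by
    ext a
    simp only [Finset.mem_image, Finset.mem_univ, true_and, Finset.mem_Icc]
    have := Set.ext_iff.mp hrangef a
    simpa [Set.mem_range, Set.mem_Icc] using this
  have e4 := Finset.sum_image (f := id) (s := Finset.univ) (g := f)
    (fun x _ y _ h => hfinj h)
  rw [himgf] at e4
  simp only [id_eq] at e4
  have e5 : ∑ m ∈ Finset.Icc 1 6, m = 21 := by decide
  have e6 : ∑ x : Fin 6, f x = f 0 + f 1 + f 2 + f 3 + f 4 + f 5 := Fin.sum_univ_six f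
  have : f 0 = f 1 := by omega
  exact absurd (hfinj this) (by decide)


private def L6 : List (Sym2 (Fin 7)) :=
  [s(0,2), s(0,3), s(0,4), s(0,5), s(0,6), s(1,2), s(2,3), s(3,4), s(4,5), s(5,6), s(6,1)]

private lemma id6 (f : Fin 7 → ℕ) (hfinj : Function.Injective f)
    (hrangef : Set.range f = Set.Icc 1 7)
    (hcover : ∀ v, 3 ≤ v → v ≤ 13 → ∃ x y, (wheelMinusSpoke 6).Adj x y ∧ f x + f y = v)
    (hdist : ∀ x y x' y', (wheelMinusSpoke 6).Adj x y → (wheelMinusSpoke 6).Adj x' y' →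
      f x + f y = f x' + f y' → s(x,y) = s(x',y')) : f 1 + 4 = 2 * f 0 := by
  have hfmem : ∀ x, 1 ≤ f x ∧ f x ≤ 7 := fun x => by
    have hx : f x ∈ Set.range f := ⟨x, rfl⟩
    rw [hrangef, Set.mem_Icc] at hx; exact hx
  set S : Sym2 (Fin 7) → ℕ := Sym2.lift ⟨fun x y => f x + f y, fun x y => Nat.add_comm _ _⟩ with hS
  have hSmk : ∀ x y : Fin 7, S s(x,y) = f x + f y := fun x y => rfl
  have hadjE : ∀ x y : Fin 7, (wheelMinusSpoke 6).Adj x y → s(x,y) ∈ L6.toFinset := by decide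
  have hEadj : ∀ x y : Fin 7, s(x,y) ∈ L6.toFinset → (wheelMinusSpoke 6).Adj x y := by decide
  have himg : L6.toFinset.image S = Finset.Icc 3 13 := by
    apply Finset.Subset.antisymm
    · intro m hm
      rw [Finset.mem_image] at hm
      obtain ⟨e, he, rfl⟩ := hm
      revert he
      induction e using Sym2.ind with
      | _ x y =>
        intro he
        have hxy := hEadj x y he
        have h1 := hfmem x; have h2 := hfmem y
        have hne : f x ≠ f y := fun h => hxy.ne (hfinj h)
        rw [hSmk, Finset.mem_Icc]
        omega
    · intro m hm
      rw [Finset.mem_Icc] at hm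
      obtain ⟨x, y, hxy, hs⟩ := hcover m hm.1 hm.2
      rw [Finset.mem_image]
      exact ⟨s(x,y), hadjE x y hxy, by rw [hSmk]; exact hs⟩
  have hinjE : ∀ e1 ∈ L6.toFinset, ∀ e2 ∈ L6.toFinset, S e1 = S e2 → e1 = e2 := by
    intro e1 h1 e2 h2 h
    revert h1 h2 h
    refine Sym2.inductionOn₂ e1 e2 ?_
    intro x y x' y' h1 h2 h
    rw [hSmk, hSmk] at h
    exact hdist x y x' y' (hEadj x y h1) (hEadj x' y' h2) h
  have e2 := Finset.sum_image (f := id) hinjE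
  rw [himg] at e2
  simp only [id_eq] at e2
  have e1 : ∑ m ∈ Finset.Icc 3 13, m = 88 := by decide
  have e3 : ∑ e ∈ L6.toFinset, S e =
      5*f 0 + 2*f 1 + 3*f 2 + 3*f 3 + 3*f 4 + 3*f 5 + 3*f 6 := by
    rw [List.sum_toFinset _ (by decide)]
    simp only [L6, List.map_cons, List.map_nil, List.sum_cons, List.sum_nil, hSmk]
    ring
  have himgf : Finset.image f Finset.univ = Finset.Icc 1 7 := by
    ext a
    simp only [Finset.mem_image, Finset.mem_univ, true_and, Finset.mem_Icc]
    have := Set.ext_iff.mp hrangef a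
    simpa [Set.mem_range, Set.mem_Icc] using this
  have e4 := Finset.sum_image (f := id) (s := Finset.univ) (g := f)
    (fun x _ y _ h => hfinj h)
  rw [himgf] at e4
  simp only [id_eq] at e4
  have e5 : ∑ m ∈ Finset.Icc 1 7, m = 28 := by decide
  have e6 : ∑ x : Fin 7, f x = f 0 + f 1 + f 2 + f 3 + f 4 + f 5 + f 6 := Fin.sum_univ_seven f
  omega

/-- for every `n ≥ 5`, the wheel minus a spoke `H_n` is not super
edge-magic. -/
theorem stmt3 (n : ℕ) (hn : 5 ≤ n) : ¬ IsSEM (wheelMinusSpoke n) := by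
  rintro ⟨k, f, g, hinj, hrange, hrangef, hmagic⟩
  simp only [Fintype.card_fin] at hrange hrangef
  set q := (wheelMinusSpoke n).edgeSet.ncard with hqdef
  have hfinj : Function.Injective f := fun a b h =>
    Sum.inl_injective (hinj (a₁ := Sum.inl a) (a₂ := Sum.inl b) h)
  have hginj : Function.Injective g := fun a b h =>
    Sum.inr_injective (hinj (a₁ := Sum.inr a) (a₂ := Sum.inr b) h)
  have hfmem : ∀ x, 1 ≤ f x ∧ f x ≤ n + 1 := fun x => by
    have hx : f x ∈ Set.range f := ⟨x, rfl⟩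
    rw [hrangef, Set.mem_Icc] at hx; exact hx
  have hglb : ∀ e, n + 2 ≤ g e ∧ g e ≤ n + 1 + q := by
    intro e
    have hx : g e ∈ Set.range (Sum.elim f g) := ⟨Sum.inr e, rfl⟩
    rw [hrange, Set.mem_Icc] at hx
    refine ⟨?_, hx.2⟩
    by_contra hlt
    have hmem : g e ∈ Set.Icc 1 (n+1) := ⟨hx.1, by omega⟩
    rw [← hrangef] at hmem
    obtain ⟨x, hxe⟩ := hmem
    exact Sum.inl_ne_inr (hinj (a₁ := Sum.inl x) (a₂ := Sum.inr e) hxe)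
  have hgsurj : ∀ m, n + 2 ≤ m → m ≤ n + 1 + q → ∃ e, g e = m := by
    intro m h1 h2
    have hm : m ∈ Set.range (Sum.elim f g) := by rw [hrange]; exact ⟨by omega, h2⟩
    obtain ⟨z, hz⟩ := hm
    rcases z with x | e
    · have hb := hfmem x
      simp only [Sum.elim_inl] at hz
      omega
    · exact ⟨e, hz⟩
  have hqlb : 2 * n - 1 ≤ q := edge_count hn
  obtain ⟨emax, hemax⟩ := hgsurj (n+1+q) (by omega) le_rfl
  obtain ⟨x₁, y₁, hxy₁, he₁⟩ := edge_decomp emax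
  rw [he₁] at hemax
  have hm₁ := hmagic x₁ y₁ hxy₁
  have hne₁ : f x₁ ≠ f y₁ := fun h => hxy₁.ne (hfinj h)
  obtain ⟨emin, hemin⟩ := hgsurj (n+2) le_rfl (by omega)
  obtain ⟨x₂, y₂, hxy₂, he₂⟩ := edge_decomp emin
  rw [he₂] at hemin
  have hm₂ := hmagic x₂ y₂ hxy₂
  have hne₂ : f x₂ ≠ f y₂ := fun h => hxy₂.ne (hfinj h)
  have hb₁ := hfmem x₁; have hb₂ := hfmem y₁
  have hb₃ := hfmem x₂; have hb₄ := hfmem y₂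
  have hk : k = 3*n + 3 := by omega
  have hq : q = 2*n - 1 := by omega
  have hcover : ∀ v, 3 ≤ v → v ≤ 2*n + 1 →
      ∃ x y, (wheelMinusSpoke n).Adj x y ∧ f x + f y = v := by
    intro v h3 hv
    obtain ⟨e, he⟩ := hgsurj (3*n + 3 - v) (by omega) (by omega)
    obtain ⟨x, y, hxy, hed⟩ := edge_decomp e
    rw [hed] at he
    have hm := hmagic x y hxy
    have hbx := hfmem x; have hby := hfmem y
    exact ⟨x, y, hxy, by omega⟩
  have hdist : ∀ x y x' y', (wheelMinusSpoke n).Adj x y → (wheelMinusSpoke n).Adj x' y' →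
      f x + f y = f x' + f y' → s(x, y) = s(x', y') := by
    intro a b a' b' h1 h2 hsum
    have e1 := hmagic a b h1
    have e2 := hmagic a' b' h2
    have hg : g ⟨s(a,b), (wheelMinusSpoke n).mem_edgeSet.mpr h1⟩ =
        g ⟨s(a',b'), (wheelMinusSpoke n).mem_edgeSet.mpr h2⟩ := by omega
    exact congrArg Subtype.val (hginj hg)
  rcases (show n = 5 ∨ n = 6 ∨ 7 ≤ n by omega) with h5 | h6 | h7
  · subst h5
    exact id5 f hfinj (by simpa using hrangef) (fun v a b => hcover v a (by omega)) hdist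
  · subst h6
    rcases (show f 0 ≤ 3 ∨ f 0 = 4 ∨ 5 ≤ f 0 by omega) with hc | hc | hc
    · exact topCase (by omega) f hfinj hfmem hcover (by omega)
    · have h14 := id6 f hfinj (by simpa using hrangef) (fun v a b => hcover v a (by omega)) hdist
      have hff : f 1 = f 0 := by omega
      exact absurd (hfinj hff) (by decide)
    · exact bottomCase (by omega) f hfinj hfmem hcover hc
  · rcases le_or_gt (f 0) 4 with hc | hc
    · exact topCase hn f hfinj hfmem hcover (by omega)
    · exact bottomCase hn f hfinj hfmem hcover (by omega)
end

section
/- For every integer n ≥ 8 with n ≡ 0 (mod 4), the super edge-magic deficiency of the wheel minus a spoke satisfies μ_s(W_n − e) ≤ n/2. -/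
open SimpleGraph

namespace Stmt6Aux


/-- rim/hub vertex labels: index 0 = hub, 1..4s = rim. -/
def vl (s i : ℕ) : ℕ :=
  if i = 0 then 6*s+1
  else if i = 1 then 5*s
  else if i % 2 = 0 then (if i ≤ 2*s then s+1-i/2 else 3*s+1-i/2)
  else (if i ≤ 2*s+1 then (6*s+3-i)/2 else (10*s+1-i)/2)

/-- isolated vertex labels, t = 0 .. 2s-1 -/
def iso (s t : ℕ) : ℕ := if t < s then 4*s+t else 4*s+1+t

/-- rim path edge sums, i = 1..4s-1 : edge {x_i, x_{i+1}} -/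
def RS (s i : ℕ) : ℕ :=
  if i = 1 then 6*s else if i ≤ 2*s then 4*s+2-i
  else if i = 2*s+1 then 4*s+1 else 8*s+1-i

lemma vl_zero (s : ℕ) : vl s 0 = 6*s+1 := rfl

lemma vl_one (s : ℕ) (hs : 2 ≤ s) : vl s 1 = 5*s := by
  unfold vl; split_ifs <;> first | exact False.elim ‹False› | omega

lemma rim_bounds {s i : ℕ} (hs : 2 ≤ s) (h1 : 2 ≤ i) (h2 : i ≤ 4*s) :
    1 ≤ vl s i ∧ vl s i ≤ 4*s-1 := by
  unfold vl; split_ifs <;> first | exact False.elim ‹False› | omega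

lemma vl_le {s i : ℕ} (hs : 2 ≤ s) (h2 : i ≤ 4*s) : vl s i ≤ 6*s+1 := by
  unfold vl; split_ifs <;> first | exact False.elim ‹False› | omega

lemma vl_pos {s i : ℕ} (hs : 2 ≤ s) (h2 : i ≤ 4*s) : 1 ≤ vl s i := by
  unfold vl; split_ifs <;> first | exact False.elim ‹False› | omega

lemma vl_inj {s i j : ℕ} (hs : 2 ≤ s) (hi : i ≤ 4*s) (hj : j ≤ 4*s)
    (h : vl s i = vl s j) : i = j := by
  unfold vl at h; split_ifs at h <;> first | exact False.elim ‹False› | omega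

lemma rim_surj {s t : ℕ} (hs : 2 ≤ s) (h1 : 1 ≤ t) (h2 : t ≤ 4*s-1) :
    ∃ i, 2 ≤ i ∧ i ≤ 4*s ∧ vl s i = t := by
  refine ⟨if t ≤ s then 2*(s+1-t) else if t ≤ 2*s then 2*(3*s+1-t)
    else if t ≤ 3*s then 6*s+3-2*t else 10*s+1-2*t, ?_⟩
  unfold vl; split_ifs <;> first | exact False.elim ‹False› | omega

lemma rim_sum {s i : ℕ} (hs : 2 ≤ s) (h1 : 1 ≤ i) (h2 : i ≤ 4*s-1) :
    vl s i + vl s (i+1) = RS s i := by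
  unfold vl RS; split_ifs <;> first | exact False.elim ‹False› | omega

lemma RS_bounds {s i : ℕ} (hs : 2 ≤ s) (h1 : 1 ≤ i) (h2 : i ≤ 4*s-1) :
    2*s+2 ≤ RS s i ∧ RS s i ≤ 6*s := by
  unfold RS; split_ifs <;> first | exact False.elim ‹False› | omega

lemma RS_inj {s i j : ℕ} (hs : 2 ≤ s) (hi1 : 1 ≤ i) (hi2 : i ≤ 4*s-1)
    (hj1 : 1 ≤ j) (hj2 : j ≤ 4*s-1) (h : RS s i = RS s j) : i = j := by
  unfold RS at h; split_ifs at h <;> first | exact False.elim ‹False› | omega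

lemma RS_surj {s t : ℕ} (hs : 2 ≤ s) (h1 : 2*s+2 ≤ t) (h2 : t ≤ 6*s) :
    ∃ i, 1 ≤ i ∧ i ≤ 4*s-1 ∧ RS s i = t := by
  refine ⟨if t = 6*s then 1 else if 4*s+2 ≤ t then 8*s+1-t
    else if t = 4*s+1 then 2*s+1 else 4*s+2-t, ?_⟩
  unfold RS; split_ifs <;> first | exact False.elim ‹False› | omega

lemma wrap_sum {s : ℕ} (hs : 2 ≤ s) : vl s (4*s) + vl s 1 = 6*s+1 := by
  unfold vl
  have h4 : (4*s) % 2 = 0 := by omega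
  split_ifs <;> first | exact False.elim ‹False› | omega

lemma iso_mem {s t : ℕ} (hs : 2 ≤ s) (h : t < 2*s) :
    4*s ≤ iso s t ∧ iso s t ≤ 6*s ∧ iso s t ≠ 5*s := by
  unfold iso; split_ifs <;> first | exact False.elim ‹False› | omega

lemma iso_inj {s t u : ℕ} (h : iso s t = iso s u) : t = u := by
  unfold iso at h; split_ifs at h <;> first | exact False.elim ‹False› | omega



/-- canonical shapes of edges of `wheelMinusSpoke (4*s)` (in terms of values) -/
def Pred (s a b : ℕ) : Prop :=
  (a = 0 ∧ 2 ≤ b ∧ b ≤ 4*s) ∨ (1 ≤ a ∧ a ≤ 4*s-1 ∧ b = a+1) ∨ (a = 4*s ∧ b = 1)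

lemma adj_char {s : ℕ} (hs : 2 ≤ s) {u v : Fin (4*s+1)}
    (h : (wheelMinusSpoke (4*s)).Adj u v) :
    ∃ a b : Fin (4*s+1), s(u,v) = s(a,b) ∧ Pred s a.val b.val := by
  rw [wheelMinusSpoke, SimpleGraph.fromRel_adj] at h
  obtain ⟨hne, h | h⟩ := h
  · refine ⟨u, v, rfl, ?_⟩
    have hu := u.isLt; have hv := v.isLt
    unfold Pred; omega
  · refine ⟨v, u, Sym2.eq_swap, ?_⟩
    have hu := u.isLt; have hv := v.isLt
    unfold Pred; omega

lemma adj_of_pred {s : ℕ} (hs : 2 ≤ s) {a b : Fin (4*s+1)}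
    (h : Pred s a.val b.val) : (wheelMinusSpoke (4*s)).Adj a b := by
  rw [wheelMinusSpoke, SimpleGraph.fromRel_adj]
  unfold Pred at h
  constructor
  · have hu := a.isLt; have hv := b.isLt
    intro hab; rw [hab] at h; omega
  · left; omega

end Stmt6Aux

namespace Stmt6Aux

lemma sum_bounds {s : ℕ} (hs : 2 ≤ s) {a b : ℕ} (h : Pred s a b) :
    2*s+2 ≤ vl s a + vl s b ∧ vl s a + vl s b ≤ 10*s := by
  rcases h with ⟨rfl, h2, h3⟩ | ⟨h1, h2, rfl⟩ | ⟨rfl, rfl⟩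
  · have := rim_bounds hs h2 h3
    rw [vl_zero]; omega
  · rw [rim_sum hs h1 h2]
    have := RS_bounds hs h1 h2
    omega
  · rw [wrap_sum hs]; omega

lemma pred_sum_inj {s : ℕ} (hs : 2 ≤ s) {a b a' b' : ℕ} (h : Pred s a b)
    (h' : Pred s a' b') (hsum : vl s a + vl s b = vl s a' + vl s b') :
    a = a' ∧ b = b' := by
  rcases h with ⟨rfl, h2, h3⟩ | ⟨h1, h2, rfl⟩ | ⟨rfl, rfl⟩ <;>
    rcases h' with ⟨rfl, g2, g3⟩ | ⟨g1, g2, rfl⟩ | ⟨rfl, rfl⟩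
  · rw [vl_zero] at hsum
    have : vl s b = vl s b' := by omega
    exact ⟨rfl, vl_inj hs (by omega) (by omega) this⟩
  · exfalso
    rw [vl_zero, rim_sum hs g1 g2] at hsum
    have := RS_bounds hs g1 g2
    have := rim_bounds hs h2 h3
    omega
  · exfalso
    rw [vl_zero, wrap_sum hs] at hsum
    have := rim_bounds hs h2 h3
    omega
  · exfalso
    rw [vl_zero, rim_sum hs h1 h2] at hsum
    have := RS_bounds hs h1 h2
    have := rim_bounds hs g2 g3
    omega
  · rw [rim_sum hs h1 h2, rim_sum hs g1 g2] at hsum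
    have := RS_inj hs h1 h2 g1 g2 hsum
    omega
  · exfalso
    rw [rim_sum hs h1 h2, wrap_sum hs] at hsum
    have := RS_bounds hs h1 h2
    unfold RS at hsum this; split_ifs at hsum <;> omega
  · exfalso
    rw [vl_zero, wrap_sum hs] at hsum
    have := rim_bounds hs g2 g3
    omega
  · exfalso
    rw [rim_sum hs g1 g2, wrap_sum hs] at hsum
    have := RS_bounds hs g1 g2
    unfold RS at hsum this; split_ifs at hsum <;> omega
  · exact ⟨rfl, rfl⟩

lemma sum_surj {s : ℕ} (hs : 2 ≤ s) {t : ℕ} (h1 : 2*s+2 ≤ t) (h2 : t ≤ 10*s) :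
    ∃ a b : Fin (4*s+1), Pred s a.val b.val ∧ vl s a.val + vl s b.val = t := by
  rcases le_or_gt t (6*s) with hle | hgt
  · obtain ⟨i, hi1, hi2, hi3⟩ := RS_surj hs h1 hle
    refine ⟨⟨i, by omega⟩, ⟨i+1, by omega⟩, Or.inr (Or.inl ⟨hi1, hi2, rfl⟩), ?_⟩
    simp only
    rw [rim_sum hs hi1 hi2, hi3]
  · rcases eq_or_lt_of_le (show 6*s+1 ≤ t by omega) with heq | hgt'
    · refine ⟨⟨4*s, by omega⟩, ⟨1, by omega⟩, Or.inr (Or.inr ⟨rfl, rfl⟩), ?_⟩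
      simp only
      rw [wrap_sum hs]; omega
    · obtain ⟨i, hi1, hi2, hi3⟩ := rim_surj hs (t := t - (6*s+1)) (by omega) (by omega)
      refine ⟨⟨0, by omega⟩, ⟨i, by omega⟩, Or.inl ⟨rfl, hi1, hi2⟩, ?_⟩
      simp only
      rw [vl_zero, hi3]; omega

end Stmt6Aux

namespace Stmt6Aux

/-- full vertex labeling -/
def F (s : ℕ) : Fin (4*s+1) ⊕ Fin (2*s) → ℕ :=
  Sum.elim (fun u => vl s u.val) (fun t => iso s t.val)

lemma vl_ne_iso {s u t : ℕ} (hs : 2 ≤ s) (hu : u ≤ 4*s) (ht : t < 2*s) :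
    vl s u ≠ iso s t := by
  unfold vl iso; split_ifs <;> first | exact False.elim ‹False› | omega

lemma F_bounds {s : ℕ} (hs : 2 ≤ s) (x : Fin (4*s+1) ⊕ Fin (2*s)) :
    1 ≤ F s x ∧ F s x ≤ 6*s+1 := by
  rcases x with u | t
  · have hu : u.val ≤ 4*s := by omega
    exact ⟨vl_pos hs hu, vl_le hs hu⟩
  · have := iso_mem hs t.isLt
    simp only [F, Sum.elim_inr]
    omega

lemma F_inj {s : ℕ} (hs : 2 ≤ s) : Function.Injective (F s) := by
  rintro (u | t) (u' | t') h
  · simp only [F, Sum.elim_inl] at h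
    exact congrArg _ (Fin.ext (vl_inj hs (by omega) (by omega) h))
  · exact absurd h (vl_ne_iso hs (by omega) t'.isLt)
  · exact absurd h.symm (vl_ne_iso hs (by omega) t.isLt)
  · simp only [F, Sum.elim_inr] at h
    exact congrArg _ (Fin.ext (iso_inj h))

lemma F_surj {s : ℕ} (hs : 2 ≤ s) {t : ℕ} (h1 : 1 ≤ t) (h2 : t ≤ 6*s+1) :
    ∃ x, F s x = t := by
  rcases le_or_gt t (4*s-1) with h | h
  · obtain ⟨i, hi1, hi2, hi3⟩ := rim_surj hs h1 h
    exact ⟨Sum.inl ⟨i, by omega⟩, hi3⟩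
  · rcases le_or_gt t (5*s-1) with h' | h'
    · refine ⟨Sum.inr ⟨t - 4*s, by omega⟩, ?_⟩
      simp only [F, Sum.elim_inr, iso]
      split_ifs <;> omega
    · rcases eq_or_lt_of_le (show 5*s ≤ t by omega) with h'' | h''
      · exact ⟨Sum.inl ⟨1, by omega⟩, by simpa [F] using (vl_one s hs).trans h''⟩
      · rcases le_or_gt t (6*s) with h3 | h3
        · refine ⟨Sum.inr ⟨t - 4*s - 1, by omega⟩, ?_⟩
          simp only [F, Sum.elim_inr, iso]
          split_ifs <;> omega
        · exact ⟨Sum.inl ⟨0, by omega⟩, by simpa [F, vl_zero] using by omega⟩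

/-- sum of the labels of the two endpoints of an edge -/
def sumF (s : ℕ) : Sym2 (Fin (4*s+1) ⊕ Fin (2*s)) → ℕ :=
  Sym2.lift ⟨fun a b => F s a + F s b, fun _ _ => Nat.add_comm _ _⟩

lemma sumF_mk (s : ℕ) (a b : Fin (4*s+1) ⊕ Fin (2*s)) :
    sumF s s(a, b) = F s a + F s b := rfl

lemma edge_rep {s : ℕ} {E : Sym2 (Fin (4*s+1) ⊕ Fin (2*s))}
    (hE : E ∈ (unionIsolated (wheelMinusSpoke (4*s)) (2*s)).edgeSet) :
    ∃ u v : Fin (4*s+1), (wheelMinusSpoke (4*s)).Adj u v ∧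
      E = s(Sum.inl u, Sum.inl v) := by
  revert hE
  refine Sym2.ind ?_ E
  intro a b hE
  rw [SimpleGraph.mem_edgeSet] at hE
  rw [unionIsolated, SimpleGraph.map_adj] at hE
  obtain ⟨u, v, huv, hu, hv⟩ := hE
  subst hu; subst hv
  exact ⟨u, v, huv, rfl⟩

lemma edge_spec {s : ℕ} (hs : 2 ≤ s) {E : Sym2 (Fin (4*s+1) ⊕ Fin (2*s))}
    (hE : E ∈ (unionIsolated (wheelMinusSpoke (4*s)) (2*s)).edgeSet) :
    ∃ a b : Fin (4*s+1), Pred s a.val b.val ∧ E = s(Sum.inl a, Sum.inl b) ∧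
      sumF s E = vl s a.val + vl s b.val := by
  obtain ⟨u, v, huv, rfl⟩ := edge_rep hE
  obtain ⟨a, b, hpair, hpred⟩ := adj_char hs huv
  have hmap : s(Sum.inl u, Sum.inl v) =
      (s(Sum.inl a, Sum.inl b) : Sym2 (Fin (4*s+1) ⊕ Fin (2*s))) := by
    have := congrArg (Sym2.map (Sum.inl : Fin (4*s+1) → Fin (4*s+1) ⊕ Fin (2*s))) hpair
    rwa [Sym2.map_pair_eq, Sym2.map_pair_eq] at this
  exact ⟨a, b, hpred, hmap, by rw [hmap]; rfl⟩

lemma sumF_bounds {s : ℕ} (hs : 2 ≤ s) {E : Sym2 (Fin (4*s+1) ⊕ Fin (2*s))}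
    (hE : E ∈ (unionIsolated (wheelMinusSpoke (4*s)) (2*s)).edgeSet) :
    2*s+2 ≤ sumF s E ∧ sumF s E ≤ 10*s := by
  obtain ⟨a, b, hpred, -, hsum⟩ := edge_spec hs hE
  rw [hsum]; exact sum_bounds hs hpred

lemma sumF_inj {s : ℕ} (hs : 2 ≤ s) {E E' : Sym2 (Fin (4*s+1) ⊕ Fin (2*s))}
    (hE : E ∈ (unionIsolated (wheelMinusSpoke (4*s)) (2*s)).edgeSet)
    (hE' : E' ∈ (unionIsolated (wheelMinusSpoke (4*s)) (2*s)).edgeSet)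
    (h : sumF s E = sumF s E') : E = E' := by
  obtain ⟨a, b, hpred, hEeq, hsum⟩ := edge_spec hs hE
  obtain ⟨a', b', hpred', hEeq', hsum'⟩ := edge_spec hs hE'
  rw [hsum, hsum'] at h
  obtain ⟨ha, hb⟩ := pred_sum_inj hs hpred hpred' h
  rw [hEeq, hEeq', Fin.ext ha, Fin.ext hb]

lemma edge_of_pred {s : ℕ} (hs : 2 ≤ s) {a b : Fin (4*s+1)}
    (h : Pred s a.val b.val) :
    (s(Sum.inl a, Sum.inl b) : Sym2 (Fin (4*s+1) ⊕ Fin (2*s))) ∈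
      (unionIsolated (wheelMinusSpoke (4*s)) (2*s)).edgeSet := by
  rw [SimpleGraph.mem_edgeSet, unionIsolated, SimpleGraph.map_adj]
  exact ⟨a, b, adj_of_pred hs h, rfl, rfl⟩

end Stmt6Aux

namespace Stmt6Aux

lemma cardV (s : ℕ) : Fintype.card (Fin (4*s+1) ⊕ Fin (2*s)) = 6*s+1 := by
  simp [Fintype.card_sum]; omega

lemma ncardE {s : ℕ} (hs : 2 ≤ s) :
    (unionIsolated (wheelMinusSpoke (4*s)) (2*s)).edgeSet.ncard = 8*s-1 := by
  have hbij : Function.Bijective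
      (fun e : (unionIsolated (wheelMinusSpoke (4*s)) (2*s)).edgeSet =>
        (⟨sumF s e.val, by
          have := sumF_bounds hs e.property
          exact Set.mem_Icc.mpr ⟨this.1, this.2⟩⟩ : ↥(Set.Icc (2*s+2) (10*s)))) := by
    constructor
    · intro e e' h
      exact Subtype.ext (sumF_inj hs e.property e'.property (congrArg Subtype.val h))
    · rintro ⟨t, ht⟩
      rw [Set.mem_Icc] at ht
      obtain ⟨a, b, hpred, hsum⟩ := sum_surj hs ht.1 ht.2
      refine ⟨⟨s(Sum.inl a, Sum.inl b), edge_of_pred hs hpred⟩, ?_⟩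
      exact Subtype.ext (by simpa [sumF_mk, F] using hsum)
  calc (unionIsolated (wheelMinusSpoke (4*s)) (2*s)).edgeSet.ncard
      = Nat.card (unionIsolated (wheelMinusSpoke (4*s)) (2*s)).edgeSet :=
        (Nat.card_coe_set_eq _).symm
    _ = Nat.card ↥(Set.Icc (2*s+2) (10*s)) := Nat.card_congr (Equiv.ofBijective _ hbij)
    _ = 8*s-1 := by
        rw [Nat.card_coe_set_eq, ← Finset.coe_Icc, Set.ncard_coe_finset, Nat.card_Icc]
        omega

lemma main {s : ℕ} (hs : 2 ≤ s) :
    IsSEM (unionIsolated (wheelMinusSpoke (4*s)) (2*s)) := by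
  refine ⟨16*s+2, F s, fun e => 16*s+2 - sumF s e.val, ?_, ?_, ?_, ?_⟩
  · -- injectivity of Sum.elim
    rintro (x | e) (y | e') h
    · exact congrArg _ (F_inj hs h)
    · exfalso
      simp only [Sum.elim_inl, Sum.elim_inr] at h
      have h1 := F_bounds hs x
      have h2 := sumF_bounds hs e'.property
      omega
    · exfalso
      simp only [Sum.elim_inl, Sum.elim_inr] at h
      have h1 := F_bounds hs y
      have h2 := sumF_bounds hs e.property
      omega
    · simp only [Sum.elim_inr] at h
      have h1 := sumF_bounds hs e.property
      have h2 := sumF_bounds hs e'.property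
      exact congrArg _ (Subtype.ext (sumF_inj hs e.property e'.property (by omega)))
  · -- range of Sum.elim
    have htot : Fintype.card (Fin (4*s+1) ⊕ Fin (2*s)) +
        (unionIsolated (wheelMinusSpoke (4*s)) (2*s)).edgeSet.ncard = 14*s := by
      rw [cardV, ncardE hs]; omega
    rw [htot]
    ext t
    simp only [Set.mem_range, Set.mem_Icc]
    constructor
    · rintro ⟨x | e, rfl⟩
      · have := F_bounds hs x
        simp only [Sum.elim_inl]
        omega
      · have := sumF_bounds hs e.property
        simp only [Sum.elim_inr]
        omega
    · rintro ⟨h1, h2⟩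
      rcases le_or_gt t (6*s+1) with h | h
      · obtain ⟨x, hx⟩ := F_surj hs h1 h
        exact ⟨Sum.inl x, hx⟩
      · obtain ⟨a, b, hpred, hsum⟩ := sum_surj hs (t := 16*s+2-t) (by omega) (by omega)
        refine ⟨Sum.inr ⟨s(Sum.inl a, Sum.inl b), edge_of_pred hs hpred⟩, ?_⟩
        simp only [Sum.elim_inr]
        rw [show sumF s s(Sum.inl a, Sum.inl b) = vl s a.val + vl s b.val from rfl, hsum]
        omega
  · -- range of F
    rw [cardV]
    ext t
    simp only [Set.mem_range, Set.mem_Icc]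
    constructor
    · rintro ⟨x, rfl⟩
      exact F_bounds hs x
    · rintro ⟨h1, h2⟩
      exact F_surj hs h1 h2
  · -- magic constant
    intro x y h
    have hsum : sumF s s(x, y) = F s x + F s y := rfl
    have hb := sumF_bounds hs (((unionIsolated (wheelMinusSpoke (4*s)) (2*s)).mem_edgeSet.mpr h))
    show F s x + (16*s+2 - sumF s s(x, y)) + F s y = 16*s+2
    rw [hsum] at hb ⊢
    omega

end Stmt6Aux



/-- for every `n ≥ 8` with `n ≡ 0 (mod 4)`,
`μₛ(W_n − e) ≤ n/2` for the wheel minus a spoke. -/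
theorem stmt6 (n : ℕ) (hn : 8 ≤ n) (hmod : n % 4 = 0) :
    semDeficiency (wheelMinusSpoke n) ≤ ((n / 2 : ℕ) : ℕ∞) := by
  obtain ⟨s, rfl⟩ : ∃ s, n = 4 * s := ⟨n / 4, by omega⟩
  have hs : 2 ≤ s := by omega
  apply sInf_le
  refine ⟨4 * s / 2, ?_, rfl⟩
  show IsSEM (unionIsolated (wheelMinusSpoke (4 * s)) (4 * s / 2))
  have h2 : 4 * s / 2 = 2 * s := by omega
  rw [h2]
  have h4 : 4 * s = 4 * s := rfl
  exact Stmt6Aux.main hs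
end

section
/- For each n ∈ {5, 6, 7}, the super edge-magic deficiency of H_n = W_n − spoke equals 1, i.e., H_n ∪ K_1 is super edge-magic. -/
set_option maxRecDepth 100000


open SimpleGraph

-- decidability
instance {n : ℕ} : DecidableRel (wheelMinusSpoke n).Adj := fun a b => by
  unfold wheelMinusSpoke; exact inferInstanceAs (Decidable (_ ∧ _))

instance {V : Type*} [Fintype V] [DecidableEq V] {G : SimpleGraph V} [DecidableRel G.Adj]
    {t : ℕ} : DecidableRel (unionIsolated G t).Adj := fun a b =>
  decidable_of_iff (∃ x y, G.Adj x y ∧ Sum.inl x = a ∧ Sum.inl y = b)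
    (by rw [unionIsolated, SimpleGraph.map_adj]; rfl)

/-- the sum of the labels of the endpoints of an edge -/
def eSum {V : Type*} (f : V → ℕ) : Sym2 V → ℕ :=
  Sym2.lift ⟨fun x y => f x + f y, fun x y => by dsimp; omega⟩

lemma isSEMWith_of {V : Type*} [Fintype V] [DecidableEq V] (G : SimpleGraph V)
    [DecidableRel G.Adj] (f : V → ℕ) (k p q : ℕ)
    (hp : Fintype.card V = p)
    (hq : G.edgeFinset.card = q)
    (hf : Finset.image f Finset.univ = Finset.Icc 1 p)
    (hg : Finset.image (fun e => k - eSum f e) G.edgeFinset = Finset.Icc (p+1) (p+q))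
    (hk : ∀ e ∈ G.edgeFinset, eSum f e ≤ k) :
    IsSEMWith G k := by
  classical
  set g : G.edgeSet → ℕ := fun e => k - eSum f e.1 with hgdef
  have hcard : Fintype.card V + G.edgeSet.ncard = p + q := by
    rw [hp, ← SimpleGraph.coe_edgeFinset, Set.ncard_coe_finset, hq]
  -- f injective
  have hfcard : (Finset.univ.image f).card = (Finset.univ : Finset V).card := by
    rw [hf, Nat.card_Icc, Finset.card_univ, hp]; omega
  have hfinj : Function.Injective f := by
    have := Finset.injOn_of_card_image_eq hfcard
    rw [Finset.coe_univ] at this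
    exact Set.injOn_univ.mp this
  have hgcard : (G.edgeFinset.image fun e => k - eSum f e).card = G.edgeFinset.card := by
    rw [hg, Nat.card_Icc, hq]; omega
  have hginjOn : Set.InjOn (fun e => k - eSum f e) ↑G.edgeFinset :=
    Finset.injOn_of_card_image_eq hgcard
  have hginj : Function.Injective g := by
    rintro ⟨e, he⟩ ⟨e', he'⟩ hee
    have he1 : e ∈ (G.edgeFinset : Set (Sym2 V)) := by
      rwa [SimpleGraph.coe_edgeFinset]
    have he2 : e' ∈ (G.edgeFinset : Set (Sym2 V)) := by
      rwa [SimpleGraph.coe_edgeFinset]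
    exact Subtype.ext (hginjOn he1 he2 hee)
  -- membership facts
  have hfmem : ∀ v, f v ∈ Finset.Icc 1 p := fun v => by
    rw [← hf]; exact Finset.mem_image_of_mem f (Finset.mem_univ v)
  have hgmem : ∀ e : G.edgeSet, g e ∈ Finset.Icc (p+1) (p+q) := fun e => by
    rw [← hg]
    refine Finset.mem_image_of_mem _ ?_
    rw [SimpleGraph.mem_edgeFinset]; exact e.2
  refine ⟨f, g, ?_, ?_, ?_, ?_⟩
  · -- injectivity of Sum.elim
    rintro (v | e) (v' | e') h <;> simp only [Sum.elim_inl, Sum.elim_inr] at h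
    · rw [hfinj h]
    · exfalso
      have h1 := Finset.mem_Icc.mp (hfmem v)
      have h2 := Finset.mem_Icc.mp (hgmem e')
      omega
    · exfalso
      have h1 := Finset.mem_Icc.mp (hfmem v')
      have h2 := Finset.mem_Icc.mp (hgmem e)
      omega
    · rw [hginj h]
  · -- range
    rw [hcard]
    ext m
    simp only [Set.mem_range, Set.mem_Icc]
    constructor
    · rintro ⟨(v | e), rfl⟩
      · have := Finset.mem_Icc.mp (hfmem v); simp only [Sum.elim_inl]; omega
      · have := Finset.mem_Icc.mp (hgmem e); simp only [Sum.elim_inr]; omega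
    · rintro ⟨h1, h2⟩
      by_cases hm : m ≤ p
      · have : m ∈ Finset.image f Finset.univ := by rw [hf]; exact Finset.mem_Icc.mpr ⟨h1, hm⟩
        obtain ⟨v, _, rfl⟩ := Finset.mem_image.mp this
        exact ⟨Sum.inl v, rfl⟩
      · have : m ∈ Finset.image (fun e => k - eSum f e) G.edgeFinset := by
          rw [hg]; exact Finset.mem_Icc.mpr ⟨by omega, h2⟩
        obtain ⟨e, he, rfl⟩ := Finset.mem_image.mp this
        exact ⟨Sum.inr ⟨e, (SimpleGraph.mem_edgeFinset).mp he⟩, rfl⟩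
  · -- range f
    rw [hp, ← Set.image_univ, ← Finset.coe_univ, ← Finset.coe_image, hf, Finset.coe_Icc]
  · -- magic
    intro x y hxy
    have hmem : s(x, y) ∈ G.edgeFinset := SimpleGraph.mem_edgeFinset.mpr (G.mem_edgeSet.mpr hxy)
    have hle := hk _ hmem
    have hS : eSum f s(x, y) = f x + f y := rfl
    show f x + (k - eSum f s(x,y)) + f y = k
    rw [hS] at hle ⊢
    omega

lemma sem_facts {V : Type*} [Fintype V] {G : SimpleGraph V} {k : ℕ} (h : IsSEMWith G k)
    (p q : ℕ) (hp : Fintype.card V = p) (hq : G.edgeSet.ncard = q) :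
    ∃ f : V → ℕ, Function.Injective f ∧ Set.range f = Set.Icc 1 p ∧
      ∀ x y x' y', G.Adj x y → G.Adj x' y' → s(x,y) ≠ s(x',y') →
        f x + f y ≠ f x' + f y' ∧ f x + f y ≤ f x' + f y' + (q-1) := by
  obtain ⟨f, g, hinj, hrange, hrangef, hmagic⟩ := h
  rw [hp, hq] at hrange
  rw [hp] at hrangef
  have hgIcc : ∀ e : G.edgeSet, p + 1 ≤ g e ∧ g e ≤ p + q := by
    intro e
    have h1 : g e ∈ Set.range (Sum.elim f g) := ⟨Sum.inr e, rfl⟩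
    rw [hrange, Set.mem_Icc] at h1
    have h2 : g e ∉ Set.range f := by
      rintro ⟨v, hv⟩
      have : Sum.elim f g (Sum.inl v) = Sum.elim f g (Sum.inr e) := hv
      exact absurd (hinj this) (by simp)
    rw [hrangef, Set.mem_Icc] at h2
    omega
  refine ⟨f, ?_, hrangef, ?_⟩
  · intro a b hab
    have : Sum.elim f g (Sum.inl a) = Sum.elim f g (Sum.inl b) := hab
    simpa using hinj this
  · intro x y x' y' hxy hxy' hne
    set e : G.edgeSet := ⟨s(x,y), G.mem_edgeSet.mpr hxy⟩ with he
    set e' : G.edgeSet := ⟨s(x',y'), G.mem_edgeSet.mpr hxy'⟩ with he'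
    have hgne : g e ≠ g e' := by
      intro hc
      have : Sum.elim f g (Sum.inr e) = Sum.elim f g (Sum.inr e') := hc
      have := hinj this
      simp only [Sum.inr.injEq] at this
      exact hne (congrArg Subtype.val this)
    have h1 := hmagic x y hxy
    have h2 := hmagic x' y' hxy'
    have b1 := hgIcc e
    have b2 := hgIcc e'
    rw [← he] at h1
    rw [← he'] at h2
    omega

lemma key {N : ℕ} {G : SimpleGraph (Fin N ⊕ Fin 0)} {k : ℕ}
    [DecidableRel G.Adj]
    (E : List (Fin N × Fin N))
    (hadj : ∀ pr ∈ E, G.Adj (Sum.inl pr.1) (Sum.inl pr.2))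
    (hEnd : (E.map fun pr => s(Sum.inl pr.1, Sum.inl pr.2) : List (Sym2 (Fin N ⊕ Fin 0))).Nodup)
    (hq : G.edgeSet.ncard = E.length)
    (h : IsSEMWith G k) :
    ∃ F : Fin N → ℕ,
      Function.Injective F ∧
      (List.ofFn F).toFinset = Finset.Icc 1 N ∧
      (∀ i, 1 ≤ F i ∧ F i ≤ N) ∧
      (∀ pr ∈ E, F pr.1 ≠ F pr.2) ∧
      (E.map fun pr => F pr.1 + F pr.2).Pairwise
        (fun a b => a ≠ b ∧ a ≤ b + (E.length - 1) ∧ b ≤ a + (E.length - 1)) := by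
  have hp : Fintype.card (Fin N ⊕ Fin 0) = N := by simp
  obtain ⟨f, hinj, hrange, hpair⟩ := sem_facts h N E.length hp hq
  set F : Fin N → ℕ := f ∘ Sum.inl with hF
  have hFinj : Function.Injective F := hinj.comp Sum.inl_injective
  have hrangeF : Set.range F = Set.Icc 1 N := by
    rw [← hrange]
    ext x
    constructor
    · rintro ⟨v, rfl⟩; exact ⟨Sum.inl v, rfl⟩
    · rintro ⟨(v | v), rfl⟩
      · exact ⟨v, rfl⟩
      · exact v.elim0
  have hbnd : ∀ i, 1 ≤ F i ∧ F i ≤ N := by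
    intro i
    have : F i ∈ Set.range F := ⟨i, rfl⟩
    rw [hrangeF, Set.mem_Icc] at this
    exact this
  refine ⟨F, hFinj, ?_, hbnd, ?_, ?_⟩
  · ext x
    rw [List.mem_toFinset, List.mem_ofFn, ← Set.mem_range, hrangeF, Finset.mem_Icc, Set.mem_Icc]
  · intro pr hpr
    have hne : Sum.inl (α := Fin N) (β := Fin 0) pr.1 ≠ Sum.inl pr.2 := (hadj pr hpr).ne
    exact fun hc => hne (congrArg Sum.inl (hFinj hc))
  · rw [List.pairwise_map]
    have h0 : E.Pairwise (fun pr pr' =>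
        (s(Sum.inl pr.1, Sum.inl pr.2) : Sym2 (Fin N ⊕ Fin 0)) ≠ s(Sum.inl pr'.1, Sum.inl pr'.2)) :=
      (List.pairwise_map).mp hEnd
    refine List.Pairwise.imp_of_mem ?_ h0
    intro pr pr' hm hm' hne
    have h1 := hpair _ _ _ _ (hadj pr hm) (hadj pr' hm') hne
    have h2 := hpair _ _ _ _ (hadj pr' hm') (hadj pr hm) (Ne.symm hne)
    exact ⟨h1.1, h1.2, h2.2⟩

def E5 : List (Fin 6 × Fin 6) := [(0,2),(0,3),(0,4),(0,5),(1,2),(2,3),(3,4),(4,5),(5,1)]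

lemma notsem5 : ¬ IsSEM (unionIsolated (wheelMinusSpoke 5) 0) := by
  rintro ⟨k, h⟩
  obtain ⟨F, hFinj, hFfin, hbnd, hne, hpw⟩ := key (G := unionIsolated (wheelMinusSpoke 5) 0)
      E5 (by decide) (by decide)
      (by rw [← SimpleGraph.coe_edgeFinset, Set.ncard_coe_finset]; decide) h
  set Ls := E5.map (fun pr => F pr.1 + F pr.2) with hLs
  have hnd : Ls.Nodup := hpw.imp (fun h => h.1)
  have hsub : Ls.toFinset ⊆ Finset.Icc 3 11 := by
    intro v hv
    rw [List.mem_toFinset, hLs, List.mem_map] at hv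
    obtain ⟨pr, hpr, rfl⟩ := hv
    have h1 := hbnd pr.1
    have h2 := hbnd pr.2
    have h3 := hne pr hpr
    rw [Finset.mem_Icc]
    omega
  have hteq : Ls.toFinset = Finset.Icc 3 11 := by
    apply Finset.eq_of_subset_of_card_le hsub
    rw [List.toFinset_card_of_nodup hnd]
    simp [hLs, E5]
  have hsum : Ls.sum = 63 := by
    have := (List.sum_toFinset (l := Ls) id hnd).symm
    rw [List.map_id, hteq] at this
    rw [this]; decide
  have hsumall : (List.ofFn F).sum = 21 := by
    have hndF : (List.ofFn F).Nodup := List.nodup_ofFn.mpr hFinj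
    have := (List.sum_toFinset (l := List.ofFn F) id hndF).symm
    rw [List.map_id, hFfin] at this
    rw [this]; decide
  have hexp : List.ofFn F = [F 0, F 1, F 2, F 3, F 4, F 5] := by
    simp only [List.ofFn_succ]
    refine congrArg₂ _ rfl (congrArg₂ _ rfl (congrArg₂ _ rfl (congrArg₂ _ rfl
      (congrArg₂ _ rfl (congrArg₂ _ rfl rfl)))))
  rw [hexp] at hsumall
  simp only [List.sum_cons, List.sum_nil] at hsumall
  have hLsexp : Ls.sum = (F 0 + F 2) + ((F 0 + F 3) + ((F 0 + F 4) + ((F 0 + F 5) +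
      ((F 1 + F 2) + ((F 2 + F 3) + ((F 3 + F 4) + ((F 4 + F 5) + (F 5 + F 1)))))))) := by
    simp [hLs, E5]
  have h01 : F 0 ≠ F 1 := fun hc => absurd (hFinj hc) (by decide)
  omega

def E7 : List (Fin 8 × Fin 8) :=
  [(0,2),(0,3),(0,4),(0,5),(0,6),(0,7),(1,2),(2,3),(3,4),(4,5),(5,6),(6,7),(7,1)]

abbrev Chk7 (ll : List ℕ) : Prop :=
  ((E7.map (fun pr => ((pr.1 : ℕ), (pr.2 : ℕ)))).map
    (fun pr => ll.getD pr.1 0 + ll.getD pr.2 0)).Pairwise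
    (fun a b => a ≠ b ∧ a ≤ b + 12 ∧ b ≤ a + 12)

set_option maxHeartbeats 4000000 in
theorem dec7a : ∀ l ∈ ([1,2,5,6,7,8] : List ℕ).permutations', ¬ Chk7 (4 :: 3 :: l) := by decide
set_option maxHeartbeats 4000000 in
theorem dec7b : ∀ l ∈ ([1,2,3,4,7,8] : List ℕ).permutations', ¬ Chk7 (5 :: 6 :: l) := by decide

lemma notsem7 : ¬ IsSEM (unionIsolated (wheelMinusSpoke 7) 0) := by
  rintro ⟨k, h⟩
  obtain ⟨F, hFinj, hFfin, hbnd, hne, hpw⟩ := key (N := 8) (G := unionIsolated (wheelMinusSpoke 7) 0)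
      E7 (by decide) (by decide)
      (by rw [← SimpleGraph.coe_edgeFinset, Set.ncard_coe_finset]; decide) h
  set Ls := E7.map (fun pr => F pr.1 + F pr.2) with hLs
  have hnd : Ls.Nodup := hpw.imp (fun h => h.1)
  have hsub : Ls.toFinset ⊆ Finset.Icc 3 15 := by
    intro v hv
    rw [List.mem_toFinset, hLs, List.mem_map] at hv
    obtain ⟨pr, hpr, rfl⟩ := hv
    have h1 := hbnd pr.1
    have h2 := hbnd pr.2
    have h3 := hne pr hpr
    rw [Finset.mem_Icc]
    omega
  have hteq : Ls.toFinset = Finset.Icc 3 15 := by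
    apply Finset.eq_of_subset_of_card_le hsub
    rw [List.toFinset_card_of_nodup hnd]
    simp [hLs, E7]
  have hsum : Ls.sum = 117 := by
    have := (List.sum_toFinset (l := Ls) id hnd).symm
    rw [List.map_id, hteq] at this
    rw [this]; decide
  have hndF : (List.ofFn F).Nodup := List.nodup_ofFn.mpr hFinj
  have hsumall : (List.ofFn F).sum = 36 := by
    have := (List.sum_toFinset (l := List.ofFn F) id hndF).symm
    rw [List.map_id, hFfin] at this
    rw [this]; decide
  have hexp : List.ofFn F = [F 0, F 1, F 2, F 3, F 4, F 5, F 6, F 7] := by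
    simp only [List.ofFn_succ]
    refine congrArg₂ _ rfl (congrArg₂ _ rfl (congrArg₂ _ rfl (congrArg₂ _ rfl
      (congrArg₂ _ rfl (congrArg₂ _ rfl (congrArg₂ _ rfl (congrArg₂ _ rfl rfl)))))))
  rw [hexp] at hsumall
  simp only [List.sum_cons, List.sum_nil] at hsumall
  have hLsexp : Ls.sum = (F 0 + F 2) + ((F 0 + F 3) + ((F 0 + F 4) + ((F 0 + F 5) +
      ((F 0 + F 6) + ((F 0 + F 7) + ((F 1 + F 2) + ((F 2 + F 3) + ((F 3 + F 4) +
      ((F 4 + F 5) + ((F 5 + F 6) + ((F 6 + F 7) + (F 7 + F 1)))))))))))) := by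
    simp [hLs, E7]
  have h01 : F 0 ≠ F 1 := fun hc => absurd (hFinj hc) (by decide)
  have hb0 := hbnd 0; have hb1 := hbnd 1
  -- pin down F 0, F 1
  have hcase : (F 0 = 4 ∧ F 1 = 3) ∨ (F 0 = 5 ∧ F 1 = 6) := by omega
  -- set up the tail list
  set l : List ℕ := [F 2, F 3, F 4, F 5, F 6, F 7] with hl
  have hndF' : (F 0 :: F 1 :: l).Nodup := hexp ▸ hndF
  have hlnd : l.Nodup := ((List.nodup_cons.mp ((List.nodup_cons.mp hndF').2)).2)
  have h0l : F 0 ∉ l := fun hc => (List.nodup_cons.mp hndF').1 (List.mem_cons_of_mem _ hc)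
  have h1l : F 1 ∉ l := (List.nodup_cons.mp ((List.nodup_cons.mp hndF').2)).1
  have hins : insert (F 0) (insert (F 1) l.toFinset) = Finset.Icc 1 8 := by
    rw [← hFfin, hexp]
    simp
  have hgetD : ∀ i : Fin 8, (F 0 :: F 1 :: l).getD (i : ℕ) 0 = F i := by
    intro i
    fin_cases i <;> rfl
  have hchk : Chk7 (F 0 :: F 1 :: l) := by
    show List.Pairwise _ _
    rw [List.map_map]
    have hmapeq : (E7.map ((fun pr => (F 0 :: F 1 :: l).getD pr.1 0 + (F 0 :: F 1 :: l).getD pr.2 0)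
        ∘ (fun pr => ((pr.1 : ℕ), (pr.2 : ℕ))))) = Ls := by
      rw [hLs]
      apply List.map_congr_left
      intro pr _
      simp only [Function.comp_apply]
      rw [hgetD pr.1, hgetD pr.2]
    rw [hmapeq]
    exact hpw
  have hmemiff : ∀ x : ℕ, x ∈ l.toFinset ↔ (1 ≤ x ∧ x ≤ 8 ∧ x ≠ F 0 ∧ x ≠ F 1) := by
    intro x
    have hx1 : x ∈ Finset.Icc 1 8 ↔ (x = F 0 ∨ x = F 1 ∨ x ∈ l.toFinset) := by
      rw [← hins]; simp
    rw [Finset.mem_Icc] at hx1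
    constructor
    · intro hx
      have hx3 := hx1.mpr (Or.inr (Or.inr hx))
      rw [List.mem_toFinset] at hx
      exact ⟨hx3.1, hx3.2, fun hh => h0l (hh ▸ hx), fun hh => h1l (hh ▸ hx)⟩
    · rintro ⟨ha, hb, hc, hd⟩
      rcases hx1.mp ⟨ha, hb⟩ with h' | h' | h'
      · exact absurd h' hc
      · exact absurd h' hd
      · exact h'
  rcases hcase with ⟨h0, h1⟩ | ⟨h0, h1⟩
  · have hlt : l.toFinset = ([1,2,5,6,7,8] : List ℕ).toFinset := by
      ext x
      rw [hmemiff x, h0, h1]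
      simp only [List.toFinset_cons, List.toFinset_nil, Finset.mem_insert,
        Finset.notMem_empty, or_false]
      omega
    have hperm : List.Perm l [1,2,5,6,7,8] :=
      List.perm_of_nodup_nodup_toFinset_eq hlnd (by decide) hlt
    have hmem := List.mem_permutations'.mpr hperm
    have hcast : (4 : ℕ) :: 3 :: l = F 0 :: F 1 :: l := by rw [h0, h1]
    exact dec7a l hmem (hcast ▸ hchk)
  · have hlt : l.toFinset = ([1,2,3,4,7,8] : List ℕ).toFinset := by
      ext x
      rw [hmemiff x, h0, h1]
      simp only [List.toFinset_cons, List.toFinset_nil, Finset.mem_insert,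
        Finset.notMem_empty, or_false]
      omega
    have hperm : List.Perm l [1,2,3,4,7,8] :=
      List.perm_of_nodup_nodup_toFinset_eq hlnd (by decide) hlt
    have hmem := List.mem_permutations'.mpr hperm
    have hcast : (5 : ℕ) :: 6 :: l = F 0 :: F 1 :: l := by rw [h0, h1]
    exact dec7b l hmem (hcast ▸ hchk)

def E6 : List (Fin 7 × Fin 7) :=
  [(0,2),(0,3),(0,4),(0,5),(0,6),(1,2),(2,3),(3,4),(4,5),(5,6),(6,1)]

abbrev Chk6 (ll : List ℕ) : Prop :=
  ((E6.map (fun pr => ((pr.1 : ℕ), (pr.2 : ℕ)))).map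
    (fun pr => ll.getD pr.1 0 + ll.getD pr.2 0)).Pairwise
    (fun a b => a ≠ b ∧ a ≤ b + 10 ∧ b ≤ a + 10)

set_option maxHeartbeats 4000000 in
theorem dec6a : ∀ l ∈ ([1,4,5,6,7] : List ℕ).permutations', ¬ Chk6 (3 :: 2 :: l) := by decide
set_option maxHeartbeats 4000000 in
theorem dec6b : ∀ l ∈ ([1,2,3,4,7] : List ℕ).permutations', ¬ Chk6 (5 :: 6 :: l) := by decide

lemma notsem6 : ¬ IsSEM (unionIsolated (wheelMinusSpoke 6) 0) := by
  rintro ⟨k, h⟩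
  obtain ⟨F, hFinj, hFfin, hbnd, hne, hpw⟩ := key (N := 7) (G := unionIsolated (wheelMinusSpoke 6) 0)
      E6 (by decide) (by decide)
      (by rw [← SimpleGraph.coe_edgeFinset, Set.ncard_coe_finset]; decide) h
  set Ls := E6.map (fun pr => F pr.1 + F pr.2) with hLs
  have hnd : Ls.Nodup := hpw.imp (fun h => h.1)
  have hsub : Ls.toFinset ⊆ Finset.Icc 3 13 := by
    intro v hv
    rw [List.mem_toFinset, hLs, List.mem_map] at hv
    obtain ⟨pr, hpr, rfl⟩ := hv
    have h1 := hbnd pr.1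
    have h2 := hbnd pr.2
    have h3 := hne pr hpr
    rw [Finset.mem_Icc]
    omega
  have hteq : Ls.toFinset = Finset.Icc 3 13 := by
    apply Finset.eq_of_subset_of_card_le hsub
    rw [List.toFinset_card_of_nodup hnd]
    simp [hLs, E6]
  have hsum : Ls.sum = 88 := by
    have := (List.sum_toFinset (l := Ls) id hnd).symm
    rw [List.map_id, hteq] at this
    rw [this]; decide
  have hndF : (List.ofFn F).Nodup := List.nodup_ofFn.mpr hFinj
  have hsumall : (List.ofFn F).sum = 28 := by
    have := (List.sum_toFinset (l := List.ofFn F) id hndF).symm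
    rw [List.map_id, hFfin] at this
    rw [this]; decide
  have hexp : List.ofFn F = [F 0, F 1, F 2, F 3, F 4, F 5, F 6] := by
    simp only [List.ofFn_succ]
    refine congrArg₂ _ rfl (congrArg₂ _ rfl (congrArg₂ _ rfl (congrArg₂ _ rfl
      (congrArg₂ _ rfl (congrArg₂ _ rfl (congrArg₂ _ rfl rfl))))))
  rw [hexp] at hsumall
  simp only [List.sum_cons, List.sum_nil] at hsumall
  have hLsexp : Ls.sum = (F 0 + F 2) + ((F 0 + F 3) + ((F 0 + F 4) + ((F 0 + F 5) +
      ((F 0 + F 6) + ((F 1 + F 2) + ((F 2 + F 3) + ((F 3 + F 4) +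
      ((F 4 + F 5) + ((F 5 + F 6) + (F 6 + F 1)))))))))) := by
    simp [hLs, E6]
  have h01 : F 0 ≠ F 1 := fun hc => absurd (hFinj hc) (by decide)
  have hb0 := hbnd 0; have hb1 := hbnd 1
  -- pin down F 0, F 1
  have hcase : (F 0 = 3 ∧ F 1 = 2) ∨ (F 0 = 5 ∧ F 1 = 6) := by omega
  -- set up the tail list
  set l : List ℕ := [F 2, F 3, F 4, F 5, F 6] with hl
  have hndF' : (F 0 :: F 1 :: l).Nodup := hexp ▸ hndF
  have hlnd : l.Nodup := ((List.nodup_cons.mp ((List.nodup_cons.mp hndF').2)).2)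
  have h0l : F 0 ∉ l := fun hc => (List.nodup_cons.mp hndF').1 (List.mem_cons_of_mem _ hc)
  have h1l : F 1 ∉ l := (List.nodup_cons.mp ((List.nodup_cons.mp hndF').2)).1
  have hins : insert (F 0) (insert (F 1) l.toFinset) = Finset.Icc 1 7 := by
    rw [← hFfin, hexp]
    simp
  have hgetD : ∀ i : Fin 7, (F 0 :: F 1 :: l).getD (i : ℕ) 0 = F i := by
    intro i
    fin_cases i <;> rfl
  have hchk : Chk6 (F 0 :: F 1 :: l) := by
    show List.Pairwise _ _
    rw [List.map_map]
    have hmapeq : (E6.map ((fun pr => (F 0 :: F 1 :: l).getD pr.1 0 + (F 0 :: F 1 :: l).getD pr.2 0)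
        ∘ (fun pr => ((pr.1 : ℕ), (pr.2 : ℕ))))) = Ls := by
      rw [hLs]
      apply List.map_congr_left
      intro pr _
      simp only [Function.comp_apply]
      rw [hgetD pr.1, hgetD pr.2]
    rw [hmapeq]
    exact hpw
  have hmemiff : ∀ x : ℕ, x ∈ l.toFinset ↔ (1 ≤ x ∧ x ≤ 7 ∧ x ≠ F 0 ∧ x ≠ F 1) := by
    intro x
    have hx1 : x ∈ Finset.Icc 1 7 ↔ (x = F 0 ∨ x = F 1 ∨ x ∈ l.toFinset) := by
      rw [← hins]; simp
    rw [Finset.mem_Icc] at hx1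
    constructor
    · intro hx
      have hx3 := hx1.mpr (Or.inr (Or.inr hx))
      rw [List.mem_toFinset] at hx
      exact ⟨hx3.1, hx3.2, fun hh => h0l (hh ▸ hx), fun hh => h1l (hh ▸ hx)⟩
    · rintro ⟨ha, hb, hc, hd⟩
      rcases hx1.mp ⟨ha, hb⟩ with h' | h' | h'
      · exact absurd h' hc
      · exact absurd h' hd
      · exact h'
  rcases hcase with ⟨h0, h1⟩ | ⟨h0, h1⟩
  · have hlt : l.toFinset = ([1,4,5,6,7] : List ℕ).toFinset := by
      ext x
      rw [hmemiff x, h0, h1]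
      simp only [List.toFinset_cons, List.toFinset_nil, Finset.mem_insert,
        Finset.notMem_empty, or_false]
      omega
    have hperm : List.Perm l [1,4,5,6,7] :=
      List.perm_of_nodup_nodup_toFinset_eq hlnd (by decide) hlt
    have hmem := List.mem_permutations'.mpr hperm
    have hcast : (3 : ℕ) :: 2 :: l = F 0 :: F 1 :: l := by rw [h0, h1]
    exact dec6a l hmem (hcast ▸ hchk)
  · have hlt : l.toFinset = ([1,2,3,4,7] : List ℕ).toFinset := by
      ext x
      rw [hmemiff x, h0, h1]
      simp only [List.toFinset_cons, List.toFinset_nil, Finset.mem_insert,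
        Finset.notMem_empty, or_false]
      omega
    have hperm : List.Perm l [1,2,3,4,7] :=
      List.perm_of_nodup_nodup_toFinset_eq hlnd (by decide) hlt
    have hmem := List.mem_permutations'.mpr hperm
    have hcast : (5 : ℕ) :: 6 :: l = F 0 :: F 1 :: l := by rw [h0, h1]
    exact dec6b l hmem (hcast ▸ hchk)

lemma sem5 : IsSEMWith (unionIsolated (wheelMinusSpoke 5) 1) 20 := by
  apply isSEMWith_of _ (Sum.elim ![1,7,5,3,6,4] ![2]) 20 7 9 <;> decide

lemma sem6 : IsSEMWith (unionIsolated (wheelMinusSpoke 6) 1) 22 := by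
  apply isSEMWith_of _ (Sum.elim ![2,3,1,4,8,5,6] ![7]) 22 8 11 <;> decide

lemma sem7 : IsSEMWith (unionIsolated (wheelMinusSpoke 7) 1) 25 := by
  apply isSEMWith_of _ (Sum.elim ![2,3,1,4,8,5,9,6] ![7]) 25 9 13 <;> decide

lemma semDef_eq_one {V : Type*} [Fintype V] (G : SimpleGraph V)
    (h1 : IsSEM (unionIsolated G 1)) (h0 : ¬ IsSEM (unionIsolated G 0)) :
    semDeficiency G = 1 := by
  apply le_antisymm
  · exact sInf_le ⟨1, h1, by simp⟩
  · apply le_sInf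
    rintro b ⟨t, ht, rfl⟩
    have ht0 : t ≠ 0 := by rintro rfl; exact h0 ht
    simpa using Nat.one_le_iff_ne_zero.mpr ht0

/-- for `n ∈ {5, 6, 7}`, `μₛ(H_n) = 1`, i.e. `H_n ∪ K₁` is super
edge-magic (and `H_n` itself is not). -/
theorem stmt7 (n : ℕ) (hn : n = 5 ∨ n = 6 ∨ n = 7) :
    semDeficiency (wheelMinusSpoke n) = 1 ∧
    IsSEM (unionIsolated (wheelMinusSpoke n) 1) := by
  rcases hn with rfl | rfl | rfl
  · exact ⟨semDef_eq_one _ ⟨20, sem5⟩ notsem5, 20, sem5⟩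
  · exact ⟨semDef_eq_one _ ⟨22, sem6⟩ notsem6, 22, sem6⟩
  · exact ⟨semDef_eq_one _ ⟨25, sem7⟩ notsem7, 25, sem7⟩
end

section
/- For integers n ≥ 1 and m ≥ 3, the join P_n + K̄_m (path joined with m isolated vertices) is super edge-magic if and only if n ∈ {1, 2}. -/
open SimpleGraph

lemma sem_card_le {V : Type*} [Fintype V] (G : SimpleGraph V) (hG : IsSEM G)
    (hne : G.edgeSet.Nonempty) :
    G.edgeSet.ncard + 3 ≤ 2 * Fintype.card V := by
  classical
  obtain ⟨k, f, g, hinj, hrange, hf, hmagic⟩ := hG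
  set p := Fintype.card V with hp
  have hfinj : Function.Injective f := by
    intro a b hab
    have := hinj (show Sum.elim f g (Sum.inl a) = Sum.elim f g (Sum.inl b) from hab)
    exact Sum.inl_injective this
  have hginj : Function.Injective g := by
    intro a b hab
    have := hinj (show Sum.elim f g (Sum.inr a) = Sum.elim f g (Sum.inr b) from hab)
    exact Sum.inr_injective this
  have hfb : ∀ x, f x ∈ Set.Icc 1 p := fun x => hf ▸ Set.mem_range_self x
  -- key: for each edge, k - g e = f x + f y ∈ Icc 3 (2p-1)
  have key : ∀ e : G.edgeSet, g e ≤ k ∧ k - g e ∈ Set.Icc 3 (2 * p - 1) := by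
    rintro ⟨e, he⟩
    induction e using Sym2.ind with
    | _ x y =>
      have hadj : G.Adj x y := G.mem_edgeSet.mp he
      have hm := hmagic x y hadj
      have hgx := hfb x
      have hgy := hfb y
      have hxy : f x ≠ f y := fun h => hadj.ne (hfinj h)
      simp only [Set.mem_Icc] at hgx hgy ⊢
      have hle : (⟨s(x,y), G.mem_edgeSet.mpr hadj⟩ : G.edgeSet) = ⟨s(x,y), he⟩ := rfl
      rw [hle] at hm
      constructor
      · omega
      · constructor
        · omega
        · omega
  have hmap : Function.Injective (fun e : G.edgeSet => (⟨k - g e, (key e).2⟩ : Set.Icc 3 (2*p-1))) := by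
    intro a b hab
    simp only [Subtype.mk.injEq] at hab
    have ha := (key a).1
    have hb := (key b).1
    exact hginj (by omega)
  have hfin : Finite (Set.Icc 3 (2*p-1) : Set ℕ) := Set.finite_Icc _ _
  have := Nat.card_le_card_of_injective _ hmap
  rw [Nat.card_coe_set_eq, Nat.card_coe_set_eq] at this
  have hcard : (Set.Icc 3 (2*p-1)).ncard = 2*p - 1 + 1 - 3 := by
    rw [Set.ncard_eq_toFinset_card']
    simp [Nat.card_Icc]
  rw [hcard] at this
  -- need 2p ≥ 4 : from nonempty edge
  obtain ⟨e, he⟩ := hne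
  have := key ⟨e, he⟩
  have h3 : 3 ≤ 2 * p - 1 := (Set.mem_Icc.mp this.2).1.trans (Set.mem_Icc.mp this.2).2
  omega

lemma pathJoin_card_ge (n m : ℕ) (hn : 1 ≤ n) :
    n * m + (n - 1) ≤ (pathJoin n m).edgeSet.ncard := by
  classical
  set G := pathJoin n m with hG
  have hmem1 : ∀ (i : Fin n) (j : Fin m), s(Sum.inl i, Sum.inr j) ∈ G.edgeSet := by
    intro i j
    rw [SimpleGraph.mem_edgeSet, hG, pathJoin, fromRel_adj]
    exact ⟨by simp, Or.inl (Or.inr ⟨i, j, rfl, rfl⟩)⟩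
  have hmem2 : ∀ (k : Fin (n-1)), s((Sum.inl ⟨k, by omega⟩ : Fin n ⊕ Fin m),
      Sum.inl ⟨(k:ℕ)+1, by omega⟩) ∈ G.edgeSet := by
    intro k
    rw [SimpleGraph.mem_edgeSet, hG, pathJoin, fromRel_adj]
    constructor
    · simp only [ne_eq, Sum.inl.injEq, Fin.mk.injEq]
      omega
    · exact Or.inl (Or.inl ⟨⟨k, by omega⟩, ⟨(k:ℕ)+1, by omega⟩, rfl, rfl, rfl⟩)
  set F : (Fin n × Fin m) ⊕ Fin (n-1) → G.edgeSet :=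
    Sum.elim (fun p => ⟨_, hmem1 p.1 p.2⟩) (fun k => ⟨_, hmem2 k⟩) with hF
  have hfinj : Function.Injective F := by
    rintro (⟨i1, j1⟩ | k1) (⟨i2, j2⟩ | k2) h <;>
      simp only [hF, Sum.elim_inl, Sum.elim_inr, Subtype.mk.injEq, Sym2.eq_iff] at h
    · rcases h with ⟨h1, h2⟩ | ⟨h1, h2⟩ <;> simp_all
    · simp at h
    · simp at h
    · rcases h with ⟨h1, h2⟩ | ⟨h1, h2⟩ <;>
        simp only [Sum.inl.injEq, Fin.mk.injEq] at h1 h2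
      · exact congrArg Sum.inr (Fin.ext h1)
      · omega
  have := Nat.card_le_card_of_injective F hfinj
  rw [Nat.card_coe_set_eq] at this
  simpa using this

lemma edgeSet_pathJoin_one (m : ℕ) :
    (pathJoin 1 m).edgeSet =
      Set.range (fun j : Fin m => s((Sum.inl 0 : Fin 1 ⊕ Fin m), Sum.inr j)) := by
  ext e
  induction e using Sym2.ind with
  | _ a b =>
    simp only [SimpleGraph.mem_edgeSet, pathJoin, fromRel_adj, Set.mem_range]
    constructor
    · rintro ⟨hne, (⟨i, j, rfl, rfl, hij⟩ | ⟨i, j, rfl, rfl⟩) |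
        (⟨i, j, rfl, rfl, hij⟩ | ⟨i, j, rfl, rfl⟩)⟩
      · have := j.2; omega
      · exact ⟨j, by rw [Subsingleton.elim i 0]⟩
      · have := j.2; omega
      · exact ⟨j, by rw [Subsingleton.elim i 0, Sym2.eq_swap]⟩
    · rintro ⟨j, hj⟩
      rw [Sym2.eq_iff] at hj
      rcases hj with ⟨rfl, rfl⟩ | ⟨rfl, rfl⟩
      · exact ⟨by simp, Or.inl (Or.inr ⟨0, j, rfl, rfl⟩)⟩
      · exact ⟨by simp, Or.inr (Or.inr ⟨0, j, rfl, rfl⟩)⟩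

lemma mem_edge_one {m : ℕ} (j : Fin m) :
    s((Sum.inl 0 : Fin 1 ⊕ Fin m), Sum.inr j) ∈ (pathJoin 1 m).edgeSet := by
  rw [edgeSet_pathJoin_one]; exact ⟨j, rfl⟩

lemma einj_one (m : ℕ) :
    Function.Injective (fun j : Fin m => s((Sum.inl 0 : Fin 1 ⊕ Fin m), Sum.inr j)) := by
  intro a b h
  simp only [Sym2.eq_iff] at h
  rcases h with ⟨-, h⟩ | ⟨h, -⟩ <;> simp_all

lemma ncard_one (m : ℕ) : (pathJoin 1 m).edgeSet.ncard = m := by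
  rw [edgeSet_pathJoin_one, ← Nat.card_coe_set_eq,
    Nat.card_range_of_injective (einj_one m), Nat.card_eq_fintype_card, Fintype.card_fin]

lemma sem_one (m : ℕ) (hm : 1 ≤ m) : IsSEM (pathJoin 1 m) := by
  classical
  set f : Fin 1 ⊕ Fin m → ℕ := Sum.elim (fun _ => 1) (fun j => (j : ℕ) + 2) with hf
  set sumS : Sym2 (Fin 1 ⊕ Fin m) → ℕ :=
    Sym2.lift ⟨fun a b => f a + f b, fun _ _ => by ring⟩ with hsumS
  set g : (pathJoin 1 m).edgeSet → ℕ := fun e => 2 * m + 4 - sumS e.1 with hg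
  have hcard : Fintype.card (Fin 1 ⊕ Fin m) = 1 + m := by simp
  have hfle : ∀ v, 1 ≤ f v ∧ f v ≤ m + 1 := by
    rintro (a | j)
    · simp [hf]
    · have := j.2; simp [hf]
  have hgval : ∀ (j : Fin m) (he : s((Sum.inl 0 : Fin 1 ⊕ Fin m), Sum.inr j) ∈
      (pathJoin 1 m).edgeSet), g ⟨_, he⟩ = 2 * m + 1 - (j : ℕ) := by
    intro j he
    have := j.2
    simp only [hg, hsumS, Sym2.lift_mk, hf, Sum.elim_inl, Sum.elim_inr]
    omega
  have hchar : ∀ e : (pathJoin 1 m).edgeSet, ∃ j : Fin m,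
      (e : Sym2 (Fin 1 ⊕ Fin m)) = s(Sum.inl 0, Sum.inr j) := by
    rintro ⟨e, he⟩
    rw [edgeSet_pathJoin_one] at he
    obtain ⟨j, hj⟩ := he
    exact ⟨j, hj.symm⟩
  have hgrange : ∀ e : (pathJoin 1 m).edgeSet, m + 2 ≤ g e ∧ g e ≤ 2 * m + 1 := by
    intro e
    obtain ⟨j, hj⟩ := hchar e
    have h2 : g e = 2 * m + 1 - (j : ℕ) := by
      have : e = ⟨s(Sum.inl 0, Sum.inr j), hj ▸ e.2⟩ := Subtype.ext hj
      rw [this, hgval]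
    have := j.2
    omega
  refine ⟨2 * m + 4, f, g, ?_, ?_, ?_, ?_⟩
  · rintro (a | e1) (b | e2) h
    · simp only [Sum.elim_inl] at h
      rcases a with a | a <;> rcases b with b | b
      · rw [Subsingleton.elim a b]
      · simp only [hf, Sum.elim_inl, Sum.elim_inr] at h; omega
      · simp only [hf, Sum.elim_inl, Sum.elim_inr] at h; omega
      · simp only [hf, Sum.elim_inr] at h
        simp [Fin.ext (by omega : (a : ℕ) = b)]
    · exfalso
      simp only [Sum.elim_inl, Sum.elim_inr] at h
      have := (hfle a).2; have := (hgrange e2).1; omega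
    · exfalso
      simp only [Sum.elim_inl, Sum.elim_inr] at h
      have := (hfle b).2; have := (hgrange e1).1; omega
    · simp only [Sum.elim_inr] at h
      obtain ⟨j1, hj1⟩ := hchar e1
      obtain ⟨j2, hj2⟩ := hchar e2
      have he1 : e1 = ⟨s(Sum.inl 0, Sum.inr j1), hj1 ▸ e1.2⟩ := Subtype.ext hj1
      have he2 : e2 = ⟨s(Sum.inl 0, Sum.inr j2), hj2 ▸ e2.2⟩ := Subtype.ext hj2
      rw [he1, hgval] at h
      rw [he2, hgval] at h
      have := j1.2; have := j2.2
      have : j1 = j2 := Fin.ext (by omega)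
      subst this
      exact congrArg Sum.inr (he1.trans he2.symm)
  · simp only [hcard, ncard_one]
    ext v
    simp only [Set.mem_range, Set.mem_Icc]
    constructor
    · rintro ⟨a | e, rfl⟩
      · have := hfle a; simp only [Sum.elim_inl]; omega
      · have := hgrange e; simp only [Sum.elim_inr]; omega
    · rintro ⟨h1, h2⟩
      by_cases hv : v ≤ m + 1
      · by_cases hv1 : v = 1
        · exact ⟨Sum.inl (Sum.inl 0), by simp [hf, hv1]⟩
        · refine ⟨Sum.inl (Sum.inr ⟨v - 2, by omega⟩), ?_⟩
          simp only [Sum.elim_inl, hf, Sum.elim_inr]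
          omega
      · refine ⟨Sum.inr ⟨s(Sum.inl 0, Sum.inr ⟨2 * m + 1 - v, by omega⟩),
          mem_edge_one _⟩, ?_⟩
        simp only [Sum.elim_inr]
        rw [hgval]
        simp only [Fin.val_mk]
        omega
  · rw [hcard]
    ext v
    simp only [Set.mem_range, Set.mem_Icc]
    constructor
    · rintro ⟨a, rfl⟩
      have := hfle a; omega
    · rintro ⟨h1, h2⟩
      by_cases hv1 : v = 1
      · exact ⟨Sum.inl 0, by simp [hf, hv1]⟩
      · refine ⟨Sum.inr ⟨v - 2, by omega⟩, ?_⟩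
        simp only [hf, Sum.elim_inr]
        omega
  · intro x y hadj
    have hxy : f x + f y ≤ 2 * m + 2 := by
      have := (hfle x).2; have := (hfle y).2; omega
    have : g ⟨s(x, y), (pathJoin 1 m).mem_edgeSet.mpr hadj⟩ = 2 * m + 4 - (f x + f y) := by
      simp [hg, hsumS, Sym2.lift_mk]
    rw [this]
    omega

def E2 (m : ℕ) : Unit ⊕ Fin m ⊕ Fin m → Sym2 (Fin 2 ⊕ Fin m)
  | Sum.inl _ => s(Sum.inl 0, Sum.inl 1)
  | Sum.inr (Sum.inl j) => s(Sum.inl 0, Sum.inr j)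
  | Sum.inr (Sum.inr j) => s(Sum.inl 1, Sum.inr j)

lemma fin2_cases (i : Fin 2) : i = 0 ∨ i = 1 := by omega

lemma edgeSet_pathJoin_two (m : ℕ) :
    (pathJoin 2 m).edgeSet = Set.range (E2 m) := by
  ext e
  induction e using Sym2.ind with
  | _ a b =>
    simp only [SimpleGraph.mem_edgeSet, pathJoin, fromRel_adj, Set.mem_range]
    constructor
    · rintro ⟨hne, (⟨i, j, rfl, rfl, hij⟩ | ⟨i, j, rfl, rfl⟩) |
        (⟨i, j, rfl, rfl, hij⟩ | ⟨i, j, rfl, rfl⟩)⟩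
      · have hi := i.2; have hj := j.2
        have : i = 0 ∧ j = 1 := ⟨Fin.ext (by omega), Fin.ext (by omega)⟩
        exact ⟨Sum.inl (), by simp [E2, this.1, this.2]⟩
      · rcases fin2_cases i with rfl | rfl
        · exact ⟨Sum.inr (Sum.inl j), rfl⟩
        · exact ⟨Sum.inr (Sum.inr j), rfl⟩
      · have hi := i.2; have hj := j.2
        have : i = 0 ∧ j = 1 := ⟨Fin.ext (by omega), Fin.ext (by omega)⟩
        exact ⟨Sum.inl (), by simp [E2, this.1, this.2, Sym2.eq_swap]⟩
      · rcases fin2_cases i with rfl | rfl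
        · exact ⟨Sum.inr (Sum.inl j), Sym2.eq_swap⟩
        · exact ⟨Sum.inr (Sum.inr j), Sym2.eq_swap⟩
    · rintro ⟨(u | j | j), he⟩ <;>
        simp only [E2] at he <;>
        rw [Sym2.eq_iff] at he <;>
        rcases he with ⟨rfl, rfl⟩ | ⟨rfl, rfl⟩
      · exact ⟨by simp, Or.inl (Or.inl ⟨0, 1, rfl, rfl, rfl⟩)⟩
      · exact ⟨by simp, Or.inr (Or.inl ⟨0, 1, rfl, rfl, rfl⟩)⟩
      · exact ⟨by simp, Or.inl (Or.inr ⟨0, j, rfl, rfl⟩)⟩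
      · exact ⟨by simp, Or.inr (Or.inr ⟨0, j, rfl, rfl⟩)⟩
      · exact ⟨by simp, Or.inl (Or.inr ⟨1, j, rfl, rfl⟩)⟩
      · exact ⟨by simp, Or.inr (Or.inr ⟨1, j, rfl, rfl⟩)⟩

lemma E2_inj (m : ℕ) : Function.Injective (E2 m) := by
  rintro (u1 | j1 | j1) (u2 | j2 | j2) h <;>
    simp_all [E2, Sym2.eq_iff]

lemma mem_E2 {m : ℕ} (x : Unit ⊕ Fin m ⊕ Fin m) : E2 m x ∈ (pathJoin 2 m).edgeSet := by
  rw [edgeSet_pathJoin_two]; exact ⟨x, rfl⟩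

lemma ncard_two (m : ℕ) : (pathJoin 2 m).edgeSet.ncard = 2 * m + 1 := by
  rw [edgeSet_pathJoin_two, ← Nat.card_coe_set_eq,
    Nat.card_range_of_injective (E2_inj m), Nat.card_eq_fintype_card]
  simp
  omega

def gv2 (m : ℕ) : Unit ⊕ Fin m ⊕ Fin m → ℕ
  | Sum.inl _ => 2 * m + 3
  | Sum.inr (Sum.inl j) => 3 * m + 3 - j
  | Sum.inr (Sum.inr j) => 2 * m + 2 - j

lemma sem_two (m : ℕ) (hm : 1 ≤ m) : IsSEM (pathJoin 2 m) := by
  classical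
  set f : Fin 2 ⊕ Fin m → ℕ :=
    Sum.elim (fun i => 1 + (i : ℕ) * (m + 1)) (fun j => (j : ℕ) + 2) with hf
  set sumS : Sym2 (Fin 2 ⊕ Fin m) → ℕ :=
    Sym2.lift ⟨fun a b => f a + f b, fun _ _ => by ring⟩ with hsumS
  set g : (pathJoin 2 m).edgeSet → ℕ := fun e => 3 * m + 6 - sumS e.1 with hg
  have hcard : Fintype.card (Fin 2 ⊕ Fin m) = 2 + m := by simp
  have hfle : ∀ v, 1 ≤ f v ∧ f v ≤ m + 2 := by
    rintro (i | j)
    · rcases fin2_cases i with rfl | rfl <;>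
        simp only [hf, Sum.elim_inl, Fin.val_zero, Fin.val_one] <;> omega
    · have := j.2; simp only [hf, Sum.elim_inr]; omega
  have hgval : ∀ (x : Unit ⊕ Fin m ⊕ Fin m) (he : E2 m x ∈ (pathJoin 2 m).edgeSet),
      g ⟨E2 m x, he⟩ = gv2 m x := by
    rintro (u | j | j) he <;>
      simp only [hg, hsumS, E2, Sym2.lift_mk, hf, Sum.elim_inl, Sum.elim_inr, gv2,
        Fin.val_zero, Fin.val_one, Fin.isValue] <;>
      [omega; (have := j.2; omega); (have := j.2; omega)]
  have hchar : ∀ e : (pathJoin 2 m).edgeSet, ∃ x, (e : Sym2 (Fin 2 ⊕ Fin m)) = E2 m x := by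
    rintro ⟨e, he⟩
    rw [edgeSet_pathJoin_two] at he
    obtain ⟨x, hx⟩ := he
    exact ⟨x, hx.symm⟩
  have hgcomp : ∀ e : (pathJoin 2 m).edgeSet, ∃ x, (e : Sym2 (Fin 2 ⊕ Fin m)) = E2 m x ∧
      g e = gv2 m x := by
    intro e
    obtain ⟨x, hx⟩ := hchar e
    refine ⟨x, hx, ?_⟩
    have : e = ⟨E2 m x, hx ▸ e.2⟩ := Subtype.ext hx
    rw [this, hgval]
  have hgv2_bounds : ∀ x : Unit ⊕ Fin m ⊕ Fin m, m + 3 ≤ gv2 m x ∧ gv2 m x ≤ 3 * m + 3 := by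
    rintro (u | j | j) <;> simp only [gv2] <;> [omega; (have := j.2; omega); (have := j.2; omega)]
  have hgrange : ∀ e : (pathJoin 2 m).edgeSet, m + 3 ≤ g e ∧ g e ≤ 3 * m + 3 := by
    intro e
    obtain ⟨x, -, hx2⟩ := hgcomp e
    rw [hx2]; exact hgv2_bounds x
  have hgvinj : ∀ x1 x2 : Unit ⊕ Fin m ⊕ Fin m, gv2 m x1 = gv2 m x2 → x1 = x2 := by
    rintro (u1 | j1 | j1) (u2 | j2 | j2) h <;> simp only [gv2] at h
    · rfl
    · exact absurd h (by have := j2.2; omega)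
    · exact absurd h (by have := j2.2; omega)
    · exact absurd h (by have := j1.2; omega)
    · exact congrArg (Sum.inr ∘ Sum.inl) (Fin.ext (by have := j1.2; have := j2.2; omega))
    · exact absurd h (by have := j1.2; have := j2.2; omega)
    · exact absurd h (by have := j1.2; omega)
    · exact absurd h (by have := j1.2; have := j2.2; omega)
    · exact congrArg (Sum.inr ∘ Sum.inr) (Fin.ext (by have := j1.2; have := j2.2; omega))
  refine ⟨3 * m + 6, f, g, ?_, ?_, ?_, ?_⟩
  · rintro (a | e1) (b | e2) h
    · simp only [Sum.elim_inl] at h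
      rcases a with a | a <;> rcases b with b | b
      · rcases fin2_cases a with rfl | rfl <;> rcases fin2_cases b with rfl | rfl <;>
          simp only [hf, Sum.elim_inl, Fin.val_zero, Fin.val_one] at h
        · rfl
        · exact absurd h (by omega)
        · exact absurd h (by omega)
        · rfl
      · exfalso
        have hb := b.2
        rcases fin2_cases a with rfl | rfl <;>
          simp only [hf, Sum.elim_inl, Sum.elim_inr, Fin.val_zero, Fin.val_one] at h <;>
          omega
      · exfalso
        have ha := a.2
        rcases fin2_cases b with rfl | rfl <;>
          simp only [hf, Sum.elim_inl, Sum.elim_inr, Fin.val_zero, Fin.val_one] at h <;>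
          omega
      · simp only [hf, Sum.elim_inr] at h
        simp [Fin.ext (by omega : (a : ℕ) = b)]
    · exfalso
      simp only [Sum.elim_inl, Sum.elim_inr] at h
      have := (hfle a).2; have := (hgrange e2).1; omega
    · exfalso
      simp only [Sum.elim_inl, Sum.elim_inr] at h
      have := (hfle b).2; have := (hgrange e1).1; omega
    · simp only [Sum.elim_inr] at h
      obtain ⟨x1, hx1, hv1⟩ := hgcomp e1
      obtain ⟨x2, hx2, hv2⟩ := hgcomp e2
      have hx : x1 = x2 := hgvinj _ _ (by rw [← hv1, ← hv2, h])
      subst hx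
      exact congrArg Sum.inr (Subtype.ext (hx1.trans hx2.symm))
  · simp only [hcard, ncard_two]
    ext v
    simp only [Set.mem_range, Set.mem_Icc]
    constructor
    · rintro ⟨a | e, rfl⟩
      · have := hfle a; simp only [Sum.elim_inl]; omega
      · have := hgrange e; simp only [Sum.elim_inr]; omega
    · rintro ⟨h1, h2⟩
      by_cases hv : v ≤ m + 2
      · by_cases hv1 : v = 1
        · refine ⟨Sum.inl (Sum.inl 0), ?_⟩
          simp only [Sum.elim_inl, hf, Fin.val_zero]
          omega
        · by_cases hv2 : v = m + 2
          · refine ⟨Sum.inl (Sum.inl 1), ?_⟩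
            simp only [Sum.elim_inl, hf, Fin.val_one]
            omega
          · refine ⟨Sum.inl (Sum.inr ⟨v - 2, by omega⟩), ?_⟩
            simp only [Sum.elim_inl, hf, Sum.elim_inr, Fin.val_mk]
            omega
      · by_cases hv3 : v ≤ 2 * m + 2
        · refine ⟨Sum.inr ⟨E2 m (Sum.inr (Sum.inr ⟨2 * m + 2 - v, by omega⟩)), mem_E2 _⟩, ?_⟩
          simp only [Sum.elim_inr]
          rw [hgval]
          simp only [gv2, Fin.val_mk]
          omega
        · by_cases hv4 : v = 2 * m + 3
          · refine ⟨Sum.inr ⟨E2 m (Sum.inl ()), mem_E2 _⟩, ?_⟩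
            simp only [Sum.elim_inr]
            rw [hgval]
            simp only [gv2]
            omega
          · refine ⟨Sum.inr ⟨E2 m (Sum.inr (Sum.inl ⟨3 * m + 3 - v, by omega⟩)), mem_E2 _⟩, ?_⟩
            simp only [Sum.elim_inr]
            rw [hgval]
            simp only [gv2, Fin.val_mk]
            omega
  · rw [hcard]
    ext v
    simp only [Set.mem_range, Set.mem_Icc]
    constructor
    · rintro ⟨a, rfl⟩
      have := hfle a; omega
    · rintro ⟨h1, h2⟩
      by_cases hv1 : v = 1
      · refine ⟨Sum.inl 0, ?_⟩
        simp only [hf, Sum.elim_inl, Fin.val_zero]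
        omega
      · by_cases hv2 : v = m + 2
        · refine ⟨Sum.inl 1, ?_⟩
          simp only [hf, Sum.elim_inl, Fin.val_one]
          omega
        · refine ⟨Sum.inr ⟨v - 2, by omega⟩, ?_⟩
          simp only [hf, Sum.elim_inr, Fin.val_mk]
          omega
  · intro x y hadj
    have hxy : f x + f y ≤ 2 * m + 4 := by
      have := (hfle x).2; have := (hfle y).2; omega
    have : g ⟨s(x, y), (pathJoin 2 m).mem_edgeSet.mpr hadj⟩ = 3 * m + 6 - (f x + f y) := by
      simp [hg, hsumS, Sym2.lift_mk]
    rw [this]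
    omega

/-- for `n ≥ 1` and `m ≥ 3`, the join `P_n + K̄_m` is super edge-magic
iff `n ∈ {1, 2}`. -/
theorem stmt8 (n m : ℕ) (hn : 1 ≤ n) (hm : 3 ≤ m) :
    IsSEM (pathJoin n m) ↔ n = 1 ∨ n = 2 := by
  constructor
  · intro hsem
    by_contra hcon
    push_neg at hcon
    have hlb := pathJoin_card_ge n m hn
    have h3n : 3 * m ≤ n * m :=
      Nat.mul_le_mul_right m (by omega)
    have h3m : 3 * n ≤ n * m := by
      calc 3 * n = n * 3 := by ring
      _ ≤ n * m := Nat.mul_le_mul_left n hm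
    have hne : (pathJoin n m).edgeSet.Nonempty := by
      apply Set.nonempty_of_ncard_ne_zero
      omega
    have hub := sem_card_le _ hsem hne
    have hcV : Fintype.card (Fin n ⊕ Fin m) = n + m := by simp
    rw [hcV] at hub
    generalize hP : n * m = P at hlb h3n h3m
    omega
  · rintro (rfl | rfl)
    · exact sem_one m (by omega)
    · exact sem_two m (by omega)
end

section
/- For all integers n, m ≥ 3, the super edge-magic deficiency of P_n + K̄_m satisfies μ_s(P_n + K̄_m) ≤ (n−1)(m−1) − 1. -/
open SimpleGraph

def edgeSum {V : Type*} (f : V → ℕ) : Sym2 V → ℕ :=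
  Sym2.lift ⟨fun a b => f a + f b, fun a b => by ring⟩

@[simp] lemma edgeSum_mk {V : Type*} (f : V → ℕ) (a b : V) :
    edgeSum f s(a, b) = f a + f b := rfl

lemma isSEM_of_sums {V : Type*} [Fintype V] (G : SimpleGraph V) (f : V → ℕ) (s r : ℕ)
    (hsr : s ≤ r)
    (hf : Set.range f = Set.Icc 1 (Fintype.card V))
    (hinj : Set.InjOn (edgeSum f) G.edgeSet)
    (him : edgeSum f '' G.edgeSet = Set.Ico s r) :
    IsSEM G := by
  classical
  set p := Fintype.card V with hp
  set k := r + p with hk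
  -- cardinality of the edge set
  have hq : G.edgeSet.ncard = r - s := by
    rw [← Set.ncard_image_of_injOn hinj, him, ← Finset.coe_Ico, Set.ncard_coe_finset,
      Nat.card_Ico]
  -- bounds on σ for edges
  have hσ : ∀ e ∈ G.edgeSet, edgeSum f e ∈ Set.Ico s r := by
    intro e he
    rw [← him]; exact Set.mem_image_of_mem _ he
  -- bounds on f
  have hfb : ∀ v : V, f v ∈ Set.Icc 1 p := by
    intro v; rw [← hf]; exact Set.mem_range_self v
  -- f is injective
  have hfinj : Function.Injective f := by
    rw [← Set.injOn_univ]
    have h1 : (Finset.univ.image f : Finset ℕ) = Finset.Icc 1 p := by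
      apply Finset.coe_injective
      simp [hf]
    have := Finset.card_image_iff (s := (Finset.univ : Finset V)) (f := f)
    rw [h1] at this
    have h2 : (Finset.Icc 1 p).card = (Finset.univ : Finset V).card := by simp [hp]
    rw [← Finset.coe_univ]
    exact this.mp h2
  refine ⟨k, f, fun e => k - edgeSum f e.1, ?_, ?_, hf, ?_⟩
  · -- injectivity of Sum.elim
    intro x y hxy
    match x, y with
    | Sum.inl a, Sum.inl b => simp only [Sum.elim_inl] at hxy; exact congrArg _ (hfinj hxy)
    | Sum.inl a, Sum.inr e =>
      exfalso
      have h1 := hfb a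
      have h2 := hσ e.1 e.2
      simp only [Sum.elim_inl, Sum.elim_inr] at hxy
      simp only [Set.mem_Icc, Set.mem_Ico] at h1 h2
      omega
    | Sum.inr e, Sum.inl a =>
      exfalso
      have h1 := hfb a
      have h2 := hσ e.1 e.2
      simp only [Sum.elim_inl, Sum.elim_inr] at hxy
      simp only [Set.mem_Icc, Set.mem_Ico] at h1 h2
      omega
    | Sum.inr e, Sum.inr e' =>
      simp only [Sum.elim_inr] at hxy
      have h1 := hσ e.1 e.2
      have h2 := hσ e'.1 e'.2
      simp only [Set.mem_Ico] at h1 h2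
      have : edgeSum f e.1 = edgeSum f e'.1 := by omega
      exact congrArg _ (Subtype.ext (hinj e.2 e'.2 this))
  · -- range
    rw [Set.Sum.elim_range, hf, hq]
    have hg : Set.range (fun e : G.edgeSet => k - edgeSum f e.1)
        = Set.Icc (p + 1) (p + (r - s)) := by
      ext y
      simp only [Set.mem_range, Set.mem_Icc]
      constructor
      · rintro ⟨e, rfl⟩
        have := hσ e.1 e.2
        simp only [Set.mem_Ico] at this
        omega
      · rintro ⟨h1, h2⟩
        have h3 : k - y ∈ Set.Ico s r := by simp only [Set.mem_Ico]; omega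
        rw [← him] at h3
        obtain ⟨e, he, hev⟩ := h3
        refine ⟨⟨e, he⟩, ?_⟩
        simp only [hev]
        omega
    rw [hg]
    ext x
    simp only [Set.mem_union, Set.mem_Icc]
    omega
  · intro x y h
    have hb := hσ s(x, y) (G.mem_edgeSet.mpr h)
    simp only [Set.mem_Ico, edgeSum_mk] at hb
    simp only [edgeSum_mk]
    omega

/-! ### The concrete labeling -/

def fu (n i : ℕ) : ℕ := if i % 2 = 0 then n / 2 + 1 + i / 2 else n + (i + 1) / 2
def gu (n w : ℕ) : ℕ := if w ≤ n then 2 * (w - (n / 2 + 1)) else 2 * (w - n) - 1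
def fv (n j : ℕ) : ℕ := if j = 0 then 1 else (j + 1) * n

lemma fu_bounds {n i : ℕ} (hn : 3 ≤ n) (hi : i < n) :
    n / 2 + 1 ≤ fu n i ∧ fu n i ≤ n / 2 + n := by
  unfold fu; split <;> omega

lemma gu_fu {n i : ℕ} (hn : 3 ≤ n) (hi : i < n) : gu n (fu n i) = i := by
  unfold fu gu; split <;> split <;> omega

lemma fu_gu {n w : ℕ} (hn : 3 ≤ n) (h1 : n / 2 + 1 ≤ w) (h2 : w ≤ n / 2 + n) :
    gu n w < n ∧ fu n (gu n w) = w := by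
  unfold fu gu; split <;> split <;> omega

lemma fu_path_sum {n i : ℕ} (hn : 3 ≤ n) (hi : i + 1 < n) :
    fu n i + fu n (i + 1) = n / 2 + n + i + 2 := by
  unfold fu; split <;> split <;> omega

/-- Base labeling on the vertices of `pathJoin n m`. -/
def f0 (n m : ℕ) : Fin n ⊕ Fin m → ℕ := Sum.elim (fun i => fu n i) (fun j => fv n j)

lemma pathJoin_adj_path {n m : ℕ} (i i' : Fin n) (h : (i' : ℕ) = (i : ℕ) + 1) :
    (pathJoin n m).Adj (Sum.inl i) (Sum.inl i') := by
  rw [pathJoin, SimpleGraph.fromRel_adj]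
  refine ⟨?_, Or.inl (Or.inl ⟨i, i', rfl, rfl, h⟩)⟩
  intro hc
  rw [Sum.inl.injEq] at hc
  subst hc
  omega

lemma pathJoin_adj_join {n m : ℕ} (i : Fin n) (j : Fin m) :
    (pathJoin n m).Adj (Sum.inl i) (Sum.inr j) := by
  rw [pathJoin, SimpleGraph.fromRel_adj]
  exact ⟨by simp, Or.inl (Or.inr ⟨i, j, rfl, rfl⟩)⟩

lemma pathJoin_edge_cases {n m : ℕ} (e : Sym2 (Fin n ⊕ Fin m))
    (he : e ∈ (pathJoin n m).edgeSet) :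
    (∃ i i' : Fin n, (i' : ℕ) = (i : ℕ) + 1 ∧ e = s(Sum.inl i, Sum.inl i')) ∨
    (∃ (i : Fin n) (j : Fin m), e = s(Sum.inl i, Sum.inr j)) := by
  induction e using Sym2.ind with
  | _ a b =>
    rw [SimpleGraph.mem_edgeSet, pathJoin, SimpleGraph.fromRel_adj] at he
    rcases he.2 with (⟨i, i', rfl, rfl, h⟩ | ⟨i, j, rfl, rfl⟩) |
      (⟨i, i', rfl, rfl, h⟩ | ⟨i, j, rfl, rfl⟩)
    · exact Or.inl ⟨i, i', h, rfl⟩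
    · exact Or.inr ⟨i, j, rfl⟩
    · exact Or.inl ⟨i, i', h, Sym2.eq_swap⟩
    · exact Or.inr ⟨i, j, Sym2.eq_swap⟩

lemma join_div {n : ℕ} (hn0 : 0 < n) {w j : ℕ} (h1 : n / 2 + 1 ≤ w) (h2 : w ≤ n / 2 + n) :
    (w + (j + 1) * n - (n / 2 + 1)) / n = j + 1 := by
  have h : w + (j + 1) * n - (n / 2 + 1) = (w - (n / 2 + 1)) + (j + 1) * n := by omega
  rw [h, Nat.add_mul_div_right _ _ hn0, Nat.div_eq_of_lt (by omega)]
  omega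

lemma base_him {n m : ℕ} (hn : 3 ≤ n) (hm : 3 ≤ m) :
    edgeSum (f0 n m) '' (pathJoin n m).edgeSet
      = Set.Ico (n / 2 + 2) (n / 2 + 1 + (m + 1) * n) := by
  have hmul : (m + 1) * n = m * n + n := by ring
  have h3n : 3 * n ≤ m * n := Nat.mul_le_mul_right n hm
  have hn0 : 0 < n := by omega
  ext x
  simp only [Set.mem_image, Set.mem_Ico]
  constructor
  · rintro ⟨e, he, rfl⟩
    rcases pathJoin_edge_cases e he with ⟨i, i', hii, rfl⟩ | ⟨i, j, rfl⟩
    · have hi' : (i : ℕ) + 1 < n := hii ▸ i'.2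
      simp only [edgeSum_mk, f0, Sum.elim_inl, hii]
      rw [fu_path_sum hn hi']
      omega
    · simp only [edgeSum_mk, f0, Sum.elim_inl, Sum.elim_inr]
      have hb := fu_bounds hn i.2
      by_cases hj : (j : ℕ) = 0
      · rw [fv, if_pos hj]; omega
      · rw [fv, if_neg hj]
        have hj1 : 2 * n ≤ ((j : ℕ) + 1) * n := Nat.mul_le_mul_right n (by omega)
        have hj2 : ((j : ℕ) + 1) * n ≤ m * n := Nat.mul_le_mul_right n (by omega)
        omega
  · rintro ⟨h1, h2⟩
    by_cases hA : x ≤ n / 2 + 1 + n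
    · set w := x - 1 with hw0
      obtain ⟨hgu, hfu⟩ := fu_gu hn (show n / 2 + 1 ≤ w by omega) (show w ≤ n / 2 + n by omega)
      refine ⟨s(Sum.inl ⟨gu n w, hgu⟩, Sum.inr ⟨0, by omega⟩),
        (pathJoin n m).mem_edgeSet.mpr (pathJoin_adj_join _ _), ?_⟩
      simp only [edgeSum_mk, f0, Sum.elim_inl, Sum.elim_inr, hfu]
      rw [fv, if_pos rfl]
      omega
    · by_cases hB : x ≤ n / 2 + 2 * n
      · set i := x - (n / 2 + n + 2) with hi0
        have hi : i + 1 < n := by omega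
        refine ⟨s(Sum.inl ⟨i, by omega⟩, Sum.inl ⟨i + 1, hi⟩),
          (pathJoin n m).mem_edgeSet.mpr (pathJoin_adj_path _ _ rfl), ?_⟩
        simp only [edgeSum_mk, f0, Sum.elim_inl]
        rw [fu_path_sum hn hi]
        omega
      · set d := x - (n / 2 + 1) with hd
        set q' := d / n with hq'
        have hq2 : 2 ≤ q' := by
          rw [hq', Nat.le_div_iff_mul_le hn0]; omega
        have hqm : q' ≤ m := by
          have hlt : d < (m + 1) * n := by omega
          have := (Nat.div_lt_iff_lt_mul hn0).mpr hlt
          omega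
        have hmod : d % n < n := Nat.mod_lt _ hn0
        have hdm : n * q' + d % n = d := Nat.div_add_mod d n
        set w := n / 2 + 1 + d % n with hw0
        obtain ⟨hgu, hfu⟩ := fu_gu hn (show n / 2 + 1 ≤ w by omega) (show w ≤ n / 2 + n by omega)
        refine ⟨s(Sum.inl ⟨gu n w, hgu⟩, Sum.inr ⟨q' - 1, by omega⟩),
          (pathJoin n m).mem_edgeSet.mpr (pathJoin_adj_join _ _), ?_⟩
        simp only [edgeSum_mk, f0, Sum.elim_inl, Sum.elim_inr, hfu]
        rw [fv, if_neg (by omega : ¬ (q' - 1 = 0))]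
        have he1 : q' - 1 + 1 = q' := by omega
        rw [he1]
        have he2 : q' * n = n * q' := by ring
        omega

lemma base_inj {n m : ℕ} (hn : 3 ≤ n) (hm : 3 ≤ m) :
    Set.InjOn (edgeSum (f0 n m)) (pathJoin n m).edgeSet := by
  have hn0 : 0 < n := by omega
  intro e1 he1 e2 he2 hsum
  rcases pathJoin_edge_cases e1 he1 with ⟨i1, i1', hp1, rfl⟩ | ⟨i1, j1, rfl⟩ <;>
    rcases pathJoin_edge_cases e2 he2 with ⟨i2, i2', hp2, rfl⟩ | ⟨i2, j2, rfl⟩ <;>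
    simp only [edgeSum_mk, f0, Sum.elim_inl, Sum.elim_inr] at hsum
  · -- path / path
    have k1 : ((i1 : ℕ)) + 1 < n := hp1 ▸ i1'.2
    have k2 : ((i2 : ℕ)) + 1 < n := hp2 ▸ i2'.2
    rw [hp1, hp2, fu_path_sum hn k1, fu_path_sum hn k2] at hsum
    have e1 : i1 = i2 := Fin.ext (by omega)
    have e2 : i1' = i2' := Fin.ext (by omega)
    rw [e1, e2]
  · -- path / join : impossible
    exfalso
    have k1 : ((i1 : ℕ)) + 1 < n := hp1 ▸ i1'.2
    rw [hp1, fu_path_sum hn k1] at hsum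
    have hb := fu_bounds hn i2.2
    by_cases hj : (j2 : ℕ) = 0
    · rw [fv, if_pos hj] at hsum; omega
    · rw [fv, if_neg hj] at hsum
      have hj1 : 2 * n ≤ ((j2 : ℕ) + 1) * n := Nat.mul_le_mul_right n (by omega)
      omega
  · -- join / path : impossible
    exfalso
    have k2 : ((i2 : ℕ)) + 1 < n := hp2 ▸ i2'.2
    rw [hp2, fu_path_sum hn k2] at hsum
    have hb := fu_bounds hn i1.2
    by_cases hj : (j1 : ℕ) = 0
    · rw [fv, if_pos hj] at hsum; omega
    · rw [fv, if_neg hj] at hsum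
      have hj1 : 2 * n ≤ ((j1 : ℕ) + 1) * n := Nat.mul_le_mul_right n (by omega)
      omega
  · -- join / join
    have hb1 := fu_bounds hn i1.2
    have hb2 := fu_bounds hn i2.2
    have hiof : ∀ a b : Fin n, fu n (a : ℕ) = fu n (b : ℕ) → a = b := by
      intro a b hab
      have := gu_fu hn a.2
      rw [hab, gu_fu hn b.2] at this
      exact Fin.ext this.symm
    simp only [fv] at hsum
    by_cases hj1 : (j1 : ℕ) = 0 <;> by_cases hj2 : (j2 : ℕ) = 0
    · rw [if_pos hj1, if_pos hj2] at hsum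
      have hff : fu n (i1 : ℕ) = fu n (i2 : ℕ) := by omega
      have hjj : j1 = j2 := Fin.ext (by omega)
      rw [hiof _ _ hff, hjj]
    · exfalso
      rw [if_pos hj1, if_neg hj2] at hsum
      have : 2 * n ≤ ((j2 : ℕ) + 1) * n := Nat.mul_le_mul_right n (by omega)
      omega
    · exfalso
      rw [if_neg hj1, if_pos hj2] at hsum
      have : 2 * n ≤ ((j1 : ℕ) + 1) * n := Nat.mul_le_mul_right n (by omega)
      omega
    · rw [if_neg hj1, if_neg hj2] at hsum
      have hdiv := congrArg (fun z => (z - (n / 2 + 1)) / n) hsum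
      rw [show ((j1 : ℕ) + 1) = (((j1 : ℕ) - 1) + 1) + 1 by omega] at hdiv hsum
      rw [show ((j2 : ℕ) + 1) = (((j2 : ℕ) - 1) + 1) + 1 by omega] at hdiv hsum
      rw [join_div hn0 hb1.1 hb1.2, join_div hn0 hb2.1 hb2.2] at hdiv
      have hjj : j1 = j2 := Fin.ext (by omega)
      have hv : (j1 : ℕ) = (j2 : ℕ) := by omega
      rw [hv] at hsum
      have hff : fu n (i1 : ℕ) = fu n (i2 : ℕ) := by omega
      rw [hiof _ _ hff, hjj]

lemma edgeSet_map' {V W : Type*} (G : SimpleGraph V) (φ : V ↪ W) :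
    (G.map φ).edgeSet = Sym2.map φ '' G.edgeSet := by
  ext e
  induction e using Sym2.ind with
  | _ a b =>
    simp only [SimpleGraph.mem_edgeSet, SimpleGraph.map_adj, Set.mem_image]
    constructor
    · rintro ⟨u, v, h, rfl, rfl⟩
      exact ⟨s(u, v), h, rfl⟩
    · rintro ⟨e', he', hme⟩
      induction e' using Sym2.ind with
      | _ u v =>
        rw [SimpleGraph.mem_edgeSet] at he'
        rw [Sym2.map_pair_eq, Sym2.eq_iff] at hme
        rcases hme with ⟨h1, h2⟩ | ⟨h1, h2⟩
        · exact ⟨u, v, he', h1, h2⟩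
        · exact ⟨v, u, he'.symm, h2, h1⟩

lemma edgeSum_map {V W : Type*} (f : W → ℕ) (φ : V → W) (e : Sym2 V) :
    edgeSum f (Sym2.map φ e) = edgeSum (f ∘ φ) e := by
  induction e using Sym2.ind with
  | _ a b => rfl

lemma f0_inj {n m : ℕ} (hn : 3 ≤ n) (hm : 3 ≤ m) : Function.Injective (f0 n m) := by
  have hiof : ∀ a b : Fin n, fu n (a : ℕ) = fu n (b : ℕ) → a = b := by
    intro a b hab
    have h1 := gu_fu hn a.2
    rw [hab, gu_fu hn b.2] at h1
    exact Fin.ext h1.symm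
  intro a b hab
  match a, b with
  | Sum.inl i, Sum.inl i' =>
    simp only [f0, Sum.elim_inl] at hab
    exact congrArg _ (hiof _ _ hab)
  | Sum.inr j, Sum.inr j' =>
    simp only [f0, Sum.elim_inr, fv] at hab
    by_cases hj : (j : ℕ) = 0 <;> by_cases hj' : (j' : ℕ) = 0
    · exact congrArg _ (Fin.ext (hj.trans hj'.symm))
    · exfalso; rw [if_pos hj, if_neg hj'] at hab
      have : 2 * n ≤ ((j' : ℕ) + 1) * n := Nat.mul_le_mul_right n (by omega)
      omega
    · exfalso; rw [if_neg hj, if_pos hj'] at hab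
      have : 2 * n ≤ ((j : ℕ) + 1) * n := Nat.mul_le_mul_right n (by omega)
      omega
    · rw [if_neg hj, if_neg hj'] at hab
      have hjj : (j : ℕ) = (j' : ℕ) := by
        have := Nat.eq_of_mul_eq_mul_right (show 0 < n by omega) hab
        omega
      exact congrArg _ (Fin.ext hjj)
  | Sum.inl i, Sum.inr j =>
    exfalso
    simp only [f0, Sum.elim_inl, Sum.elim_inr, fv] at hab
    have hb := fu_bounds hn i.2
    by_cases hj : (j : ℕ) = 0
    · rw [if_pos hj] at hab; omega
    · rw [if_neg hj] at hab
      have : 2 * n ≤ ((j : ℕ) + 1) * n := Nat.mul_le_mul_right n (by omega)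
      omega
  | Sum.inr j, Sum.inl i =>
    exfalso
    simp only [f0, Sum.elim_inl, Sum.elim_inr, fv] at hab
    have hb := fu_bounds hn i.2
    by_cases hj : (j : ℕ) = 0
    · rw [if_pos hj] at hab; omega
    · rw [if_neg hj] at hab
      have : 2 * n ≤ ((j : ℕ) + 1) * n := Nat.mul_le_mul_right n (by omega)
      omega

lemma f0_mem {n m : ℕ} (hn : 3 ≤ n) (hm : 3 ≤ m) (v : Fin n ⊕ Fin m) :
    1 ≤ f0 n m v ∧ f0 n m v ≤ n * m := by
  have h3n : 3 * n ≤ m * n := Nat.mul_le_mul_right n hm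
  have hmn : m * n = n * m := by ring
  match v with
  | Sum.inl i =>
    have hb := fu_bounds hn i.2
    simp only [f0, Sum.elim_inl]
    omega
  | Sum.inr j =>
    simp only [f0, Sum.elim_inr, fv]
    by_cases hj : (j : ℕ) = 0
    · rw [if_pos hj]; omega
    · rw [if_neg hj]
      have h1 : 1 * n ≤ ((j : ℕ) + 1) * n := Nat.mul_le_mul_right n (by omega)
      have h2 : ((j : ℕ) + 1) * n ≤ m * n := Nat.mul_le_mul_right n (by omega)
      omega

/-- for `n, m ≥ 3`, `μₛ(P_n + K̄_m) ≤ (n−1)(m−1) − 1`. -/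
theorem stmt9 (n m : ℕ) (hn : 3 ≤ n) (hm : 3 ≤ m) :
    semDeficiency (pathJoin n m) ≤ (((n - 1) * (m - 1) - 1 : ℕ) : ℕ∞) := by
  classical
  set t := (n - 1) * (m - 1) - 1 with htdef
  have harith : t = n * m - (n + m) ∧ n + m ≤ n * m := by
    obtain ⟨a, rfl⟩ : ∃ a, n = 3 + a := ⟨n - 3, by omega⟩
    obtain ⟨b, rfl⟩ : ∃ b, m = 3 + b := ⟨m - 3, by omega⟩
    have e1 : (3 + a - 1) * (3 + b - 1) = 4 + 2 * a + 2 * b + a * b := by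
      rw [show 3 + a - 1 = 2 + a by omega, show 3 + b - 1 = 2 + b by omega]; ring
    have e3 : (3 + a) * (3 + b) = 9 + 3 * a + 3 * b + a * b := by ring
    omega
  suffices hsem : IsSEM (unionIsolated (pathJoin n m) t) by
    exact sInf_le ⟨t, hsem, rfl⟩
  have hcard : Fintype.card ((Fin n ⊕ Fin m) ⊕ Fin t) = n * m := by
    simp only [Fintype.card_sum, Fintype.card_fin]
    omega
  set used : Finset ℕ := Finset.univ.image (f0 n m) with hused
  have hsub : used ⊆ Finset.Icc 1 (n * m) := by
    intro x hx
    rw [hused, Finset.mem_image] at hx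
    obtain ⟨v, _, rfl⟩ := hx
    have := f0_mem hn hm v
    rw [Finset.mem_Icc]
    omega
  have hucard : used.card = n + m := by
    rw [hused, Finset.card_image_of_injective _ (f0_inj hn hm)]
    simp
  set A := Finset.Icc 1 (n * m) \ used with hA
  have hAcard : A.card = t := by
    rw [hA, Finset.card_sdiff_of_subset hsub, hucard, Nat.card_Icc]
    omega
  set eA := A.equivFinOfCardEq hAcard with heA
  set f : ((Fin n ⊕ Fin m) ⊕ Fin t) → ℕ :=
    Sum.elim (f0 n m) (fun k => ((eA.symm k : ℕ))) with hfdef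
  have hmulpos : 0 < (m + 1) * n := Nat.mul_pos (by omega) (by omega)
  refine isSEM_of_sums _ f (n / 2 + 2) (n / 2 + 1 + (m + 1) * n) (by omega) ?_ ?_ ?_
  · -- range
    rw [hcard, hfdef, Set.Sum.elim_range]
    have r1 : Set.range (f0 n m) = ↑used := by
      rw [hused, Finset.coe_image, Finset.coe_univ, Set.image_univ]
    have r2 : Set.range (fun k : Fin t => ((eA.symm k : ℕ))) = ↑A := by
      ext x
      simp only [Set.mem_range, Finset.mem_coe]
      constructor
      · rintro ⟨k, rfl⟩
        exact (eA.symm k).2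
      · intro hx
        exact ⟨eA ⟨x, hx⟩, by simp⟩
    rw [r1, r2, ← Finset.coe_union, Finset.union_sdiff_of_subset hsub, Finset.coe_Icc]
  · -- injectivity on the edge set
    have hES : (unionIsolated (pathJoin n m) t).edgeSet
        = Sym2.map (Function.Embedding.inl : (Fin n ⊕ Fin m) ↪ _) '' (pathJoin n m).edgeSet :=
      edgeSet_map' _ _
    rw [hES]
    rintro x ⟨e1, he1, rfl⟩ y ⟨e2, he2, rfl⟩ hxy
    rw [edgeSum_map, edgeSum_map] at hxy
    have hcomp : f ∘ (Function.Embedding.inl : (Fin n ⊕ Fin m) ↪ _) = f0 n m := rfl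
    rw [hcomp] at hxy
    exact congrArg _ (base_inj hn hm he1 he2 hxy)
  · -- image of sums
    have hES : (unionIsolated (pathJoin n m) t).edgeSet
        = Sym2.map (Function.Embedding.inl : (Fin n ⊕ Fin m) ↪ _) '' (pathJoin n m).edgeSet :=
      edgeSet_map' _ _
    rw [hES, Set.image_image]
    have hfun : (fun e => edgeSum f (Sym2.map (Function.Embedding.inl : (Fin n ⊕ Fin m) ↪ _) e))
        = edgeSum (f0 n m) := funext fun e => edgeSum_map f _ e
    rw [hfun]
    exact base_him hn hm
end
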